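/- arXiv:0911.4840 — 6 statements merged into one kernel-verified Lean document; each statement's English description precedes it below -/
import Mathlib

section
/- Let g ≥ 1, let τ be a symmetric g×g complex matrix whose imaginary part Im τ is positive definite, and let σ, σ′ ∈ ℂ^g with σ ≠ 0. Then there exists a g×g complex matrix C such that for every index k ∈ {1,…,g} one has Im( Σ_i C_{k i}·σ_i + σ_k ) = 0 and Im( Σ_{j,i} C_{j i}·σ_i·τ_{j k} + σ′_k ) = 0. -/
/-- solvability of the system of `2g` real equations arising in the proof
that every flat factor of automorphy is equivalent to a unitary flat one.
`τ` is a symmetric `g × g` complex matrix with positive definite imaginary part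
(a Riemann period matrix), `σ, σ' ∈ ℂ^g` with `σ ≠ 0`. -/
theorem flat_factor_unitarization_system
    (g : ℕ) (hg : 1 ≤ g)
    (τ : Matrix (Fin g) (Fin g) ℂ) (hτsym : τ.IsSymm)
    (hτpos : (Matrix.of fun i j => (τ i j).im).PosDef)
    (σ σ' : Fin g → ℂ) (hσ : σ ≠ 0) :
    ∃ C : Matrix (Fin g) (Fin g) ℂ,
      ∀ k : Fin g,
        ((∑ i, C k i * σ i) + σ k).im = 0 ∧
        ((∑ j, ∑ i, C j i * σ i * τ j k) + σ' k).im = 0 := by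
  obtain ⟨i₀, hi₀⟩ := Function.ne_iff.mp hσ
  have hi₀' : σ i₀ ≠ 0 := hi₀
  set M : Matrix (Fin g) (Fin g) ℝ := Matrix.of fun i j => (τ i j).im with hM
  haveI : Invertible M := hτpos.isUnit.invertible
  set b : Fin g → ℝ := fun k => -(σ k).im with hb
  set w : Fin g → ℝ := fun k => -(σ' k).im - ∑ j, b j * (τ j k).re with hw
  set a : Fin g → ℝ := M⁻¹.mulVec w with ha
  have hMa : M.mulVec a = w := by
    rw [ha, Matrix.mulVec_mulVec, Matrix.mul_nonsing_inv _ ((Matrix.isUnit_iff_isUnit_det M).mp hτpos.isUnit), Matrix.one_mulVec]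
  set v : Fin g → ℂ := fun k => ⟨a k, b k⟩ with hv
  refine ⟨Matrix.of fun k i => if i = i₀ then v k / σ i₀ else 0, ?_⟩
  have hsum : ∀ k' : Fin g,
      (∑ i, (Matrix.of fun k i => if i = i₀ then v k / σ i₀ else 0) k' i * σ i) = v k' := by
    intro k'
    rw [Finset.sum_eq_single i₀]
    · simp [div_mul_cancel₀ _ hi₀']
    · intro i _ hii; simp [hii]
    · intro h; exact absurd (Finset.mem_univ i₀) h
  intro k
  constructor
  · rw [hsum]
    simp [hv, hb]
  · have h1 : ∀ j, ∑ i, (Matrix.of fun k i => if i = i₀ then v k / σ i₀ else 0) j i * σ i * τ j k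
        = v j * τ j k := by
      intro j
      rw [← Finset.sum_mul, hsum]
    simp only [h1]
    have h2 : (∑ j, v j * τ j k).im = ∑ j, (a j * (τ j k).im + b j * (τ j k).re) := by
      rw [Complex.im_sum]
      refine Finset.sum_congr rfl fun j _ => ?_
      simp [hv, Complex.mul_im]; try ring
    have h3 : ∑ j, a j * (τ j k).im = w k := by
      have := congrFun hMa k
      rw [Matrix.mulVec, dotProduct] at this
      calc ∑ j, a j * (τ j k).im = ∑ j, M k j * a j := by
            refine Finset.sum_congr rfl fun j _ => ?_
            have : (τ j k).im = (τ k j).im := by rw [← hτsym.apply]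
            rw [this, mul_comm]; rfl
        _ = w k := this
    rw [Complex.add_im, h2, Finset.sum_add_distrib, h3, hw]
    ring
end

section
/- Let s > 1, let ρ be an s-factor of automorphy for G, and let f : 𝔻 → ℂ be measurable with ‖f‖_{L¹_s(𝔻)} = ∫_𝔻 λ(z)^{2−s}|f(z)| d²z < ∞. Then: (i) for almost every z ∈ 𝔻 the series Θ_ρ[f](z) = Σ_{g∈G} f(g(z))·ρ_g(z)^{−1} converges absolutely; (ii) Θ_ρ[f] is an automorphic form for ρ, and ‖Θ_ρ[f]‖_{L¹_s(𝔻,G)} ≤ ‖f‖_{L¹_s(𝔻)}; (iii) if moreover f is holomorphic, the series converges normally (locally uniformly absolutely) on 𝔻 and Θ_ρ[f] ∈ A¹_ρ(𝔻,G). -/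
open MeasureTheory

/-- The open unit disc in `ℂ`. -/
def UD : Set ℂ := Metric.ball 0 1

open MeasureTheory Metric Set Complex

noncomputable def Complex.abs : AbsoluteValue ℂ ℝ where
  toFun z := ‖z‖
  map_mul' := norm_mul
  nonneg' := norm_nonneg
  eq_zero' _ := norm_eq_zero
  add_le' := norm_add_le

lemma Complex.norm_eq_abs (z : ℂ) : ‖z‖ = Complex.abs z := rfl

lemma Complex.abs_conj (z : ℂ) : Complex.abs ((starRingEnd ℂ) z) = Complex.abs z :=
  Complex.norm_conj z

lemma Complex.abs_ofReal (r : ℝ) : Complex.abs (r : ℂ) = |r| := by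
  change ‖(r : ℂ)‖ = |r|; simp

lemma Complex.abs_I : Complex.abs Complex.I = 1 := by
  change ‖Complex.I‖ = 1; simp

lemma Complex.continuous_abs : Continuous Complex.abs := continuous_norm

lemma Complex.sq_abs (z : ℂ) : Complex.abs z ^ 2 = Complex.normSq z :=
  (Complex.normSq_eq_norm_sq z).symm

lemma Complex.normSq_eq_abs (z : ℂ) : Complex.normSq z = Complex.abs z ^ 2 :=
  Complex.normSq_eq_norm_sq z

lemma abs_circleMap_zero (R θ : ℝ) : Complex.abs (circleMap 0 R θ) = |R| :=
  norm_circleMap_zero R θ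

lemma Complex.polarCoord_symm_abs (p : ℝ × ℝ) :
    Complex.abs (Complex.polarCoord.symm p) = |p.1| := by
  change ‖Complex.polarCoord.symm p‖ = |p.1|
  rw [Complex.polarCoord_symm_apply, norm_mul, Complex.norm_real, Real.norm_eq_abs]
  rw [show ((Real.cos p.2 : ℂ) + (Real.sin p.2 : ℂ) * Complex.I) = Complex.exp (p.2 * Complex.I) by
    rw [Complex.exp_mul_I]; push_cast; ring]
  rw [Complex.norm_exp_ofReal_mul_I, mul_one]

noncomputable def mb (a z : ℂ) : ℂ := (a - z) / (1 - (starRingEnd ℂ) a * z)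

lemma memUD_iff {z : ℂ} : z ∈ ball (0:ℂ) 1 ↔ Complex.abs z < 1 := by
  rw [mem_ball_zero_iff, Complex.norm_eq_abs]

lemma mb_denom_ne {a z : ℂ} (ha : Complex.abs a < 1) (hz : Complex.abs z ≤ 1) :
    1 - (starRingEnd ℂ) a * z ≠ 0 := by
  intro h
  have h1 : (1 : ℂ) = (starRingEnd ℂ) a * z := by linear_combination h
  have : (1:ℝ) = Complex.abs ((starRingEnd ℂ) a * z) := by rw [← h1]; simp
  rw [map_mul, Complex.abs_conj] at this
  nlinarith [Complex.abs.nonneg a, Complex.abs.nonneg z]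

lemma mb_key {a z : ℂ} :
    Complex.normSq (1 - (starRingEnd ℂ) a * z) - Complex.normSq (a - z)
      = (1 - Complex.normSq a) * (1 - Complex.normSq z) := by
  simp only [Complex.normSq_apply, Complex.sub_re, Complex.sub_im, Complex.mul_re, Complex.mul_im,
    Complex.one_re, Complex.one_im, Complex.conj_re, Complex.conj_im]
  ring

lemma mb_abs_lt {a z : ℂ} (ha : Complex.abs a < 1) (hz : Complex.abs z < 1) :
    Complex.abs (mb a z) < 1 := by
  have hd := mb_denom_ne ha hz.le
  have hd' : 0 < Complex.normSq (1 - (starRingEnd ℂ) a * z) := by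
    rwa [Complex.normSq_pos]
  have hkey := @mb_key a z
  have h1 : Complex.normSq a < 1 := by
    rw [Complex.normSq_eq_abs]; nlinarith [Complex.abs.nonneg a]
  have h2 : Complex.normSq z < 1 := by
    rw [Complex.normSq_eq_abs]; nlinarith [Complex.abs.nonneg z]
  have hlt : Complex.normSq (mb a z) < 1 := by
    rw [mb, Complex.normSq_div, div_lt_one hd']
    nlinarith
  rw [Complex.normSq_eq_abs] at hlt
  nlinarith [Complex.abs.nonneg (mb a z)]

lemma mb_mapsTo {a : ℂ} (ha : Complex.abs a < 1) :
    Set.MapsTo (mb a) (ball (0:ℂ) 1) (ball (0:ℂ) 1) := fun z hz =>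
  memUD_iff.mpr (mb_abs_lt ha (memUD_iff.mp hz))

lemma mb_self {a : ℂ} : mb a a = 0 := by simp [mb]

lemma mb_zero {a : ℂ} : mb a 0 = a := by simp [mb]

lemma mb_invol {a z : ℂ} (ha : Complex.abs a < 1) (hz : Complex.abs z < 1) :
    mb a (mb a z) = z := by
  have hd := mb_denom_ne ha hz.le
  have haa : Complex.abs ((starRingEnd ℂ) a * a) < 1 := by
    rw [map_mul, Complex.abs_conj]
    nlinarith [Complex.abs.nonneg a]
  have hca : 1 - (starRingEnd ℂ) a * a ≠ 0 := by
    intro h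
    have h1 : (1 : ℂ) = (starRingEnd ℂ) a * a := by linear_combination h
    have : (1:ℝ) = Complex.abs ((starRingEnd ℂ) a * a) := by rw [← h1]; simp
    linarith
  rw [mb, mb]
  rw [div_eq_iff]
  · have hd' : 1 - z * (starRingEnd ℂ) a ≠ 0 := by rwa [mul_comm z]
    field_simp
    ring
  · intro h
    apply hca
    have : (1 - (starRingEnd ℂ) a * ((a - z) / (1 - (starRingEnd ℂ) a * z)))
        * (1 - (starRingEnd ℂ) a * z) = 1 - (starRingEnd ℂ) a * a := by
      field_simp
      ring
    rw [← this, h, zero_mul]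

lemma mb_hasDerivAt {a z : ℂ} (h : 1 - (starRingEnd ℂ) a * z ≠ 0) :
    HasDerivAt (mb a) (((Complex.normSq a : ℂ) - 1) / (1 - (starRingEnd ℂ) a * z) ^ 2) z := by
  have h1 : HasDerivAt (fun z : ℂ => a - z) (-1) z := by
    simpa using (hasDerivAt_id z).const_sub a
  have h2 : HasDerivAt (fun z : ℂ => 1 - (starRingEnd ℂ) a * z) (-((starRingEnd ℂ) a)) z := by
    simpa using ((hasDerivAt_id z).const_mul ((starRingEnd ℂ) a)).const_sub 1
  have hd := h1.div h2 h
  have hna : (starRingEnd ℂ) a * a = (Complex.normSq a : ℂ) := by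
    rw [mul_comm, Complex.mul_conj]
  have heq : ((Complex.normSq a : ℂ) - 1)
      = -1 * (1 - (starRingEnd ℂ) a * z) - (a - z) * -((starRingEnd ℂ) a) := by
    linear_combination -hna
  rw [heq]
  exact hd

lemma mb_differentiableOn {a : ℂ} (ha : Complex.abs a < 1) :
    DifferentiableOn ℂ (mb a) (ball (0:ℂ) 1) := by
  intro z hz
  rw [memUD_iff] at hz
  exact (mb_hasDerivAt (mb_denom_ne ha hz.le)).differentiableAt.differentiableWithinAt


open MeasureTheory Metric Set Complex

lemma sp_deriv {φ : ℂ → ℂ} (hφ : DifferentiableOn ℂ φ (ball (0:ℂ) 1))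
    (hm : Set.MapsTo φ (ball (0:ℂ) 1) (ball (0:ℂ) 1)) {a : ℂ} (ha : Complex.abs a < 1) :
    Complex.abs (deriv φ a) * (1 - Complex.abs a ^ 2) ≤ 1 - Complex.abs (φ a) ^ 2 := by
  set b := φ a with hbdef
  have hb : Complex.abs b < 1 := memUD_iff.mp (hm (memUD_iff.mpr ha))
  set ψ := mb b ∘ (φ ∘ mb a) with hψdef
  have hψd : DifferentiableOn ℂ ψ (ball (0:ℂ) 1) :=
    (mb_differentiableOn hb).comp (hφ.comp (mb_differentiableOn ha) (mb_mapsTo ha))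
      ((hm.comp (mb_mapsTo ha)))
  have hψm : Set.MapsTo ψ (ball (0:ℂ) 1) (ball (0:ℂ) 1) :=
    (mb_mapsTo hb).comp (hm.comp (mb_mapsTo ha))
  have hψ0 : ψ 0 = 0 := by
    simp only [ψ, Function.comp_apply, mb_zero, ← hbdef, mb_self]
  have hS : Complex.abs (deriv ψ 0) ≤ 1 := Complex.norm_deriv_le_one_of_mapsTo_ball hψd
    (by rw [hψ0]; exact hψm.mono_right ball_subset_closedBall) one_pos
  -- compute deriv ψ 0
  have h₁ : HasDerivAt (mb a) ((Complex.normSq a : ℂ) - 1) 0 := by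
    have := mb_hasDerivAt (a := a) (z := 0) (by simpa using mb_denom_ne ha (by simp))
    simpa using this
  have h₂ : HasDerivAt φ (deriv φ a) (mb a 0) := by
    rw [mb_zero]
    exact (hφ.differentiableAt (isOpen_ball.mem_nhds (memUD_iff.mpr ha))).hasDerivAt
  have hin : HasDerivAt (φ ∘ mb a) (deriv φ a * ((Complex.normSq a : ℂ) - 1)) 0 :=
    h₂.comp 0 h₁
  have hbb : 1 - (starRingEnd ℂ) b * b ≠ 0 := mb_denom_ne hb hb.le
  have h₃ : HasDerivAt (mb b)
      (((Complex.normSq b : ℂ) - 1) / (1 - (starRingEnd ℂ) b * b) ^ 2) ((φ ∘ mb a) 0) := by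
    have := mb_hasDerivAt (a := b) (z := b) hbb
    simpa only [Function.comp_apply, mb_zero, ← hbdef] using this
  have hc : HasDerivAt ψ
      (((Complex.normSq b : ℂ) - 1) / (1 - (starRingEnd ℂ) b * b) ^ 2
        * (deriv φ a * ((Complex.normSq a : ℂ) - 1))) 0 := h₃.comp 0 hin
  have hderiv := hc.deriv
  rw [hderiv] at hS
  have hcb : (starRingEnd ℂ) b * b = ((Complex.normSq b : ℝ) : ℂ) := by
    rw [mul_comm, Complex.mul_conj]
  have hnb : Complex.normSq b < 1 := by
    rw [← Complex.sq_abs]; nlinarith [Complex.abs.nonneg b]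
  have hna : Complex.normSq a < 1 := by
    rw [← Complex.sq_abs]; nlinarith [Complex.abs.nonneg a]
  have habs : Complex.abs (((Complex.normSq b : ℂ) - 1) / (1 - (starRingEnd ℂ) b * b) ^ 2
        * (deriv φ a * ((Complex.normSq a : ℂ) - 1)))
      = (1 - Complex.normSq b)⁻¹ * (Complex.abs (deriv φ a) * (1 - Complex.normSq a)) := by
    rw [map_mul, map_mul, map_div₀, map_pow, hcb]
    have e1 : ((Complex.normSq b : ℂ) - 1) = (((Complex.normSq b - 1 : ℝ)) : ℂ) := by
      push_cast; ring
    have e2 : (1 : ℂ) - ((Complex.normSq b : ℝ) : ℂ) = (((1 - Complex.normSq b : ℝ)) : ℂ) := by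
      push_cast; ring
    have e3 : ((Complex.normSq a : ℂ) - 1) = (((Complex.normSq a - 1 : ℝ)) : ℂ) := by
      push_cast; ring
    rw [e1, e2, e3, Complex.abs_ofReal, Complex.abs_ofReal, Complex.abs_ofReal]
    rw [abs_of_nonpos (by linarith), abs_of_pos (by linarith), abs_of_nonpos (by linarith)]
    have hne : (1 - Complex.normSq b) ≠ 0 := by linarith
    field_simp
    ring
  rw [habs] at hS
  simp only [← Complex.sq_abs] at hS hnb hna ⊢
  have h1b : 0 < 1 - Complex.abs b ^ 2 := by linarith
  calc Complex.abs (deriv φ a) * (1 - Complex.abs a ^ 2)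
      = (1 - Complex.abs b ^ 2) * ((1 - Complex.abs b ^ 2)⁻¹
          * (Complex.abs (deriv φ a) * (1 - Complex.abs a ^ 2))) := by
        field_simp
    _ ≤ (1 - Complex.abs b ^ 2) * 1 := by
        apply mul_le_mul_of_nonneg_left hS h1b.le
    _ = 1 - Complex.abs (φ a) ^ 2 := by rw [mul_one]

lemma sp_dist {φ : ℂ → ℂ} (hφ : DifferentiableOn ℂ φ (ball (0:ℂ) 1))
    (hm : Set.MapsTo φ (ball (0:ℂ) 1) (ball (0:ℂ) 1)) {w z : ℂ}
    (hw : Complex.abs w < 1) (hz : Complex.abs z < 1) :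
    Complex.abs (mb (φ w) (φ z)) ≤ Complex.abs (mb w z) := by
  set b := φ w with hbdef
  have hb : Complex.abs b < 1 := memUD_iff.mp (hm (memUD_iff.mpr hw))
  set ψ := mb b ∘ (φ ∘ mb w) with hψdef
  have hψd : DifferentiableOn ℂ ψ (ball (0:ℂ) 1) :=
    (mb_differentiableOn hb).comp (hφ.comp (mb_differentiableOn hw) (mb_mapsTo hw))
      ((hm.comp (mb_mapsTo hw)))
  have hψm : Set.MapsTo ψ (ball (0:ℂ) 1) (ball (0:ℂ) 1) :=
    (mb_mapsTo hb).comp (hm.comp (mb_mapsTo hw))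
  have hψ0 : ψ 0 = 0 := by
    simp only [ψ, Function.comp_apply, mb_zero, ← hbdef, mb_self]
  have hξ : Complex.abs (mb w z) < 1 := mb_abs_lt hw hz
  have hS : Complex.abs (ψ (mb w z)) ≤ Complex.abs (mb w z) :=
    Complex.norm_le_norm_of_mapsTo_ball hψd (hψm.mono_right ball_subset_closedBall) hψ0 hξ
  have : ψ (mb w z) = mb b (φ z) := by
    simp only [ψ, Function.comp_apply, mb_invol hw hz]
  rwa [this] at hS


open MeasureTheory Metric Set Complex
open scoped Real

lemma circleMap_eq_polar (c : ℂ) (p : ℝ × ℝ) :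
    c + Complex.polarCoord.symm p = circleMap c p.1 p.2 := by
  rw [Complex.polarCoord_symm_apply, circleMap, Complex.exp_mul_I]
  push_cast
  ring

lemma meanBound {u : ℂ → ℂ} {c : ℂ} {R : ℝ} (hR : 0 < R)
    (hu : DifferentiableOn ℂ u (closedBall c R)) :
    ENNReal.ofReal (Real.pi / 2 * R ^ 2 * Complex.abs (u c))
      ≤ ∫⁻ z in ball c R, ENNReal.ofReal (Complex.abs (u z)) := by
  have hπ : (0:ℝ) < π := Real.pi_pos
  -- Step A: circle averages
  have hcirc : ∀ t : ℝ, t ∈ Set.Ioo (R/2) R →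
      2 * π * Complex.abs (u c) ≤ ∫ θ in (0:ℝ)..(2*π), Complex.abs (u (circleMap c t θ)) := by
    intro t ht
    have ht0 : 0 < t := lt_of_le_of_lt (by linarith) ht.1
    have hC := DifferentiableOn.circleIntegral_sub_inv_smul
      (hu.mono (closedBall_subset_closedBall ht.2.le)) (mem_ball_self ht0)
    have hn1 : ‖(2 * (π:ℂ) * Complex.I)‖ = 2 * π := by
      simp [Complex.norm_eq_abs, Complex.abs_I, _root_.abs_of_pos hπ]
    have hnorm2 : ‖(2 * (π:ℂ) * Complex.I) • u c‖ = 2 * π * Complex.abs (u c) := by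
      rw [norm_smul, hn1, Complex.norm_eq_abs]
    have hle : ‖∮ z in C(c, t), (z - c)⁻¹ • u z‖
        ≤ ∫ θ in (0:ℝ)..(2*π), Complex.abs (u (circleMap c t θ)) := by
      rw [circleIntegral]
      refine le_trans (intervalIntegral.norm_integral_le_integral_norm (by positivity)) ?_
      apply le_of_eq
      apply intervalIntegral.integral_congr
      intro θ _
      dsimp only
      rw [norm_smul, norm_smul, deriv_circleMap, circleMap_sub_center]
      simp only [Complex.norm_eq_abs, map_mul, Complex.abs_I, mul_one, norm_inv,
        abs_circleMap_zero, abs_of_pos ht0]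
      field_simp
    rw [hC, hnorm2] at hle
    exact hle
  set M : ℝ × ℝ → ℝ := fun p => p.1 * Complex.abs (u (circleMap c p.1 p.2)) with hM
  set S₁ : Set ℝ := Set.Ioo (R/2) R with hS₁
  set S₂ : Set ℝ := Set.Ioo (-π) π with hS₂
  -- integrability of M on S₁ ×ˢ S₂
  have hMc : ContinuousOn M (Set.Icc (R/2) R ×ˢ Set.Icc (-π) π) := by
    apply ContinuousOn.mul continuousOn_fst
    apply Complex.continuous_abs.comp_continuousOn
    apply hu.continuousOn.comp
    · apply Continuous.continuousOn
      unfold circleMap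
      continuity
    · intro p hp
      rw [mem_closedBall, Complex.dist_eq]
      have : circleMap c p.1 p.2 - c = circleMap 0 p.1 p.2 := circleMap_sub_center _ _ _
      rw [this]
      rw [norm_circleMap_zero]
      rw [_root_.abs_of_nonneg (by linarith [hp.1.1] : (0:ℝ) ≤ p.1)]
      exact hp.1.2
  have hMint : IntegrableOn M (S₁ ×ˢ S₂) := by
    refine (hMc.integrableOn_compact (isCompact_Icc.prod isCompact_Icc)).mono_set ?_
    exact Set.prod_mono Set.Ioo_subset_Icc_self Set.Ioo_subset_Icc_self
  have hvol : (volume : Measure (ℝ × ℝ)) = (volume : Measure ℝ).prod volume :=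
    Measure.volume_eq_prod ℝ ℝ
  have hMint' : Integrable M (((volume : Measure ℝ).restrict S₁).prod
      ((volume : Measure ℝ).restrict S₂)) := by
    rw [Measure.prod_restrict]
    rwa [IntegrableOn, hvol] at hMint
  -- inner bound
  have hinner : ∀ t ∈ S₁, R/2 * (2 * π * Complex.abs (u c)) ≤ ∫ θ in S₂, M (t, θ) := by
    intro t ht
    have ht0 : 0 < t := lt_of_le_of_lt (by linarith) ht.1
    have h1 : ∫ θ in S₂, M (t, θ) = t * ∫ θ in S₂, Complex.abs (u (circleMap c t θ)) := by
      simp only [hM]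
      exact integral_const_mul t _
    have hper : Function.Periodic (fun θ => Complex.abs (u (circleMap c t θ))) (2*π) :=
      (periodic_circleMap c t).comp fun z => Complex.abs (u z)
    have h2 : ∫ θ in S₂, Complex.abs (u (circleMap c t θ))
        = ∫ θ in (0:ℝ)..(2*π), Complex.abs (u (circleMap c t θ)) := by
      rw [hS₂, ← MeasureTheory.integral_Ioc_eq_integral_Ioo,
        ← intervalIntegral.integral_of_le (by linarith : -π ≤ π)]
      have h := hper.intervalIntegral_add_eq (-π) 0
      have e : -π + 2*π = π := by ring
      rw [e, zero_add] at h
      exact h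
    have h3 := hcirc t ht
    rw [h1, h2]
    have h4 : (0:ℝ) ≤ 2 * π * Complex.abs (u c) := by positivity
    calc R/2 * (2 * π * Complex.abs (u c)) ≤ t * (2 * π * Complex.abs (u c)) := by
          apply mul_le_mul_of_nonneg_right ht.1.le h4
      _ ≤ t * ∫ θ in (0:ℝ)..(2*π), Complex.abs (u (circleMap c t θ)) := by
          apply mul_le_mul_of_nonneg_left h3 ht0.le
  -- outer bound
  set J := ∫ p in S₁ ×ˢ S₂, M p with hJ
  have hJiter : J = ∫ t in S₁, ∫ θ in S₂, M (t, θ) := by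
    rw [hJ, hvol]
    exact setIntegral_prod M (by rwa [IntegrableOn, hvol] at hMint)
  have hinner_int : IntegrableOn (fun t => ∫ θ in S₂, M (t, θ)) S₁ :=
    hMint'.integral_prod_left
  have hJlb : π / 2 * R ^ 2 * Complex.abs (u c) ≤ J := by
    rw [hJiter]
    have hconst : ∫ _ in S₁, (R/2 * (2 * π * Complex.abs (u c)))
        = (R - R/2) * (R/2 * (2 * π * Complex.abs (u c))) := by
      rw [setIntegral_const, hS₁, Real.volume_real_Ioo_of_le (by linarith)]
      simp [smul_eq_mul]
    calc π / 2 * R ^ 2 * Complex.abs (u c)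
        = (R - R/2) * (R/2 * (2 * π * Complex.abs (u c))) := by ring
      _ = ∫ _ in S₁, (R/2 * (2 * π * Complex.abs (u c))) := hconst.symm
      _ ≤ ∫ t in S₁, ∫ θ in S₂, M (t, θ) := by
          apply setIntegral_mono_on _ hinner_int measurableSet_Ioo hinner
          exact integrableOn_const (by rw [hS₁, Real.volume_Ioo]; exact ENNReal.ofReal_ne_top)
  -- Step C : J ≤ area integral
  set W : ℂ → ℝ := Set.indicator {ζ : ℂ | Complex.abs (ζ - c) ∈ S₁}
      (fun ζ => Complex.abs (u ζ)) with hW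
  have hpolar := Complex.integral_comp_polarCoord_symm (fun z => W (c + z))
  have hWeq : ∀ p ∈ polarCoord.target,
      p.1 • W (c + Complex.polarCoord.symm p) = Set.indicator (S₁ ×ˢ S₂) M p := by
    intro p hp
    rw [polarCoord_target] at hp
    have hp1 : 0 < p.1 := hp.1
    have habs : Complex.abs (c + Complex.polarCoord.symm p - c) = p.1 := by
      simp only [add_sub_cancel_left]
      rw [Complex.polarCoord_symm_abs, abs_of_pos hp1]
    by_cases hmem : p.1 ∈ S₁
    · have hE : c + Complex.polarCoord.symm p ∈ {ζ : ℂ | Complex.abs (ζ - c) ∈ S₁} := by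
        rw [Set.mem_setOf_eq, habs]; exact hmem
      have hS : p ∈ S₁ ×ˢ S₂ := ⟨hmem, hp.2⟩
      rw [hW, Set.indicator_of_mem hE, Set.indicator_of_mem hS, hM,
        circleMap_eq_polar c p]
      simp [smul_eq_mul]
    · have hE : c + Complex.polarCoord.symm p ∉ {ζ : ℂ | Complex.abs (ζ - c) ∈ S₁} := by
        rw [Set.mem_setOf_eq, habs]; exact hmem
      have hS : p ∉ S₁ ×ˢ S₂ := fun h => hmem h.1
      rw [hW, Set.indicator_of_notMem hE, Set.indicator_of_notMem hS, smul_zero]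
  have hEmeas : MeasurableSet {ζ : ℂ | Complex.abs (ζ - c) ∈ S₁} := by
    have : {ζ : ℂ | Complex.abs (ζ - c) ∈ S₁}
        = (fun ζ => Complex.abs (ζ - c)) ⁻¹' S₁ := rfl
    rw [this]
    exact (Complex.continuous_abs.comp (continuous_id.sub continuous_const)).measurable
      (by rw [hS₁]; exact measurableSet_Ioo)
  have hJeq : J = ∫ z, W (c + z) := by
    rw [← hpolar, hJ]
    rw [setIntegral_congr_fun polarCoord.open_target.measurableSet hWeq]
    rw [setIntegral_indicator (measurableSet_Ioo.prod measurableSet_Ioo)]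
    have hsub : Set.Ioo (R/2) R ×ˢ Set.Ioo (-π) π ⊆ polarCoord.target := by
      rw [polarCoord_target]
      apply Set.prod_mono_left
      intro x hx
      exact lt_of_le_of_lt (by linarith) hx.1
    rw [Set.inter_eq_self_of_subset_right hsub]
  have hIa : IntegrableOn (fun z => Complex.abs (u z)) (ball c R) := by
    refine ((Complex.continuous_abs.comp_continuousOn hu.continuousOn).integrableOn_compact
      (isCompact_closedBall c R)).mono_set ball_subset_closedBall
  have hJub : J ≤ ∫ z in ball c R, Complex.abs (u z) := by
    rw [hJeq, integral_add_left_eq_self W c, hW, integral_indicator hEmeas]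
    apply setIntegral_mono_set hIa
    · filter_upwards with z using Complex.abs.nonneg _
    · apply HasSubset.Subset.eventuallyLE
      intro ζ hζ
      rw [mem_ball, Complex.dist_eq]
      exact hζ.2
  -- conclude
  have hfinal : π / 2 * R ^ 2 * Complex.abs (u c) ≤ ∫ z in ball c R, Complex.abs (u z) :=
    le_trans hJlb hJub
  calc ENNReal.ofReal (π / 2 * R ^ 2 * Complex.abs (u c))
      ≤ ENNReal.ofReal (∫ z in ball c R, Complex.abs (u z)) := ENNReal.ofReal_le_ofReal hfinal
    _ = ∫⁻ z in ball c R, ENNReal.ofReal (Complex.abs (u z)) := by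
        apply ofReal_integral_eq_lintegral_ofReal hIa
        filter_upwards with z using Complex.abs.nonneg _


open MeasureTheory Metric Set Complex

lemma det_complex_smul (d : ℂ) :
    ((ContinuousLinearMap.smulRight (1 : ℂ →L[ℂ] ℂ) d).restrictScalars ℝ).det
      = Complex.normSq d := by
  have h : (((ContinuousLinearMap.smulRight (1 : ℂ →L[ℂ] ℂ) d).restrictScalars ℝ)
      : ℂ →ₗ[ℝ] ℂ) = (Algebra.lmul ℝ ℂ) d := by
    ext z
    simp [mul_comm]
  rw [ContinuousLinearMap.det, h]
  rw [← LinearMap.det_toMatrix Complex.basisOneI]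
  have h2 : (LinearMap.toMatrix Complex.basisOneI Complex.basisOneI) ((Algebra.lmul ℝ ℂ) d)
      = Algebra.leftMulMatrix Complex.basisOneI d := rfl
  rw [h2, Algebra.leftMulMatrix_complex, Matrix.det_fin_two_of, Complex.normSq_apply]
  ring

lemma UD_eq : UD = ball (0:ℂ) 1 := rfl

lemma mem_UD {z : ℂ} : z ∈ UD ↔ Complex.abs z < 1 := memUD_iff

lemma one_sub_sq_pos {z : ℂ} (hz : z ∈ UD) : 0 < 1 - Complex.abs z ^ 2 := by
  rw [mem_UD] at hz
  nlinarith [Complex.abs.nonneg z]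

lemma measurable_rpow_const (c : ℝ) : Measurable fun x : ℝ => x ^ c := by
  have m1 : Measurable fun x : ℝ => Real.exp (Real.log x * c) :=
    (Real.measurable_log.mul_const c).exp
  have m2 : Measurable fun x : ℝ => Real.exp (Real.log x * c) * Real.cos (c * Real.pi) :=
    m1.mul_const _
  have heq : (fun x : ℝ => x ^ c) = Set.piecewise {x : ℝ | 0 < x}
      (fun x => Real.exp (Real.log x * c))
      (Set.piecewise {x : ℝ | x < 0}
        (fun x => Real.exp (Real.log x * c) * Real.cos (c * Real.pi))
        (fun _ => if c = 0 then 1 else 0)) := by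
    funext x
    rcases lt_trichotomy x 0 with h | h | h
    · rw [Set.piecewise_eq_of_notMem _ _ _ (by simp [not_lt.mpr h.le]),
        Set.piecewise_eq_of_mem _ _ _ (by simpa using h), Real.rpow_def_of_neg h]
    · subst h
      rw [Set.piecewise_eq_of_notMem _ _ _ (by simp),
        Set.piecewise_eq_of_notMem _ _ _ (by simp)]
      by_cases hc : c = 0
      · simp [hc]
      · simp [hc, Real.zero_rpow hc]
    · rw [Set.piecewise_eq_of_mem _ _ _ (by simpa using h), Real.rpow_def_of_pos h]
  have hs1 : MeasurableSet {x : ℝ | 0 < x} := measurableSet_Ioi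
  have hs2 : MeasurableSet {x : ℝ | x < 0} := measurableSet_Iio
  rw [heq]
  exact Measurable.piecewise hs1 m1 (Measurable.piecewise hs2 m2 measurable_const)


set_option maxHeartbeats 1000000 in
/-- convergence of Poincaré series.  `G` is a countable group of
biholomorphic automorphisms of the unit disc `UD` acting properly discontinuously
(action `A`), with measurable fundamental domain `F`, `s > 1`, `ρ` an `s`-factor of
automorphy for `G`, and `f` measurable with finite `L¹_s(𝔻)`-norm.  Then:
(i) for a.e. `z ∈ 𝔻` the Poincaré series `Θ_ρ[f](z) = Σ_g f(g z) ρ_g(z)⁻¹`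
converges absolutely; (ii) `Θ_ρ[f]` is an automorphic form for `ρ` and
`‖Θ_ρ[f]‖_{L¹_s(𝔻,G)} ≤ ‖f‖_{L¹_s(𝔻)}`; (iii) if `f` is holomorphic on `𝔻`,
the series converges normally on `𝔻` and `Θ_ρ[f] ∈ A¹_ρ(𝔻,G)`.
(Weights: `λ(z)^(2-s) = (1 - |z|²)^(s-2)` with `λ` the Poincaré density.) -/
theorem poincare_series_convergence
    {G : Type*} [Group G] [Countable G]
    (A : G → ℂ → ℂ)
    (hA_one : ∀ z ∈ UD, A 1 z = z)
    (hA_mul : ∀ g h : G, ∀ z ∈ UD, A (g * h) z = A g (A h z))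
    (hA_holo : ∀ g : G, DifferentiableOn ℂ (A g) UD)
    (hA_bij : ∀ g : G, Set.BijOn (A g) UD UD)
    (hA_proper : ∀ z ∈ UD, ∃ U : Set ℂ, U ⊆ UD ∧ IsOpen U ∧ z ∈ U ∧
      {g : G | (A g '' U ∩ U).Nonempty}.Finite)
    (F : Set ℂ) (hF_sub : F ⊆ UD) (hF_meas : MeasurableSet F)
    (hF_cover : volume (UD \ ⋃ g : G, A g '' F) = 0)
    (hF_disj : ∀ g h : G, g ≠ h → volume (A g '' F ∩ A h '' F) = 0)
    (s : ℝ) (hs : 1 < s)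
    (ρ : G → ℂ → ℂ)
    (hρ_holo : ∀ g : G, DifferentiableOn ℂ (ρ g) UD)
    (hρ_ne : ∀ g : G, ∀ z ∈ UD, ρ g z ≠ 0)
    (hρ_cocycle : ∀ g h : G, ∀ z ∈ UD, ρ (g * h) z = ρ g (A h z) * ρ h z)
    (hρ_s : ∀ g : G, ∀ z ∈ UD,
      ‖ρ g z‖ = ‖deriv (A g) z‖ ^ (-s))
    (f : ℂ → ℂ) (hf_meas : Measurable f)
    (hf_int : ∫⁻ z in UD,
      ENNReal.ofReal ((1 - ‖z‖ ^ 2) ^ (s - 2) * ‖f z‖) < ⊤)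
    (Θ : ℂ → ℂ) (hΘ : Θ = fun z => ∑' g : G, f (A g z) * (ρ g z)⁻¹) :
    (∀ᵐ z ∂volume.restrict UD,
      Summable fun g : G => ‖f (A g z) * (ρ g z)⁻¹‖) ∧
    (∀ g : G, ∀ z ∈ UD, Θ (A g z) = ρ g z * Θ z) ∧
    (∫⁻ z in F,
        ENNReal.ofReal ((1 - ‖z‖ ^ 2) ^ (s - 2) * ‖Θ z‖) ≤
      ∫⁻ z in UD,
        ENNReal.ofReal ((1 - ‖z‖ ^ 2) ^ (s - 2) * ‖f z‖)) ∧
    (DifferentiableOn ℂ f UD →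
      (∀ K : Set ℂ, K ⊆ UD → IsCompact K →
        Summable fun g : G => ⨆ z ∈ K, ‖f (A g z) * (ρ g z)⁻¹‖) ∧
      DifferentiableOn ℂ Θ UD) := by
  subst hΘ
  simp only [Complex.norm_eq_abs] at hρ_s hf_int ⊢
  classical
  have hs0 : 0 < s := by linarith
  have hUDopen : IsOpen UD := isOpen_ball
  have hUDmeas : MeasurableSet UD := hUDopen.measurableSet
  have hmemA : ∀ (g : G), ∀ z ∈ UD, A g z ∈ UD := fun g z hz => (hA_bij g).mapsTo hz
  have hInv : ∀ (g : G), ∀ z ∈ UD, A g⁻¹ (A g z) = z := by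
    intro g z hz
    rw [← hA_mul g⁻¹ g z hz, inv_mul_cancel, hA_one z hz]
  have hInv' : ∀ (g : G), ∀ z ∈ UD, A g (A g⁻¹ z) = z := by
    intro g z hz
    rw [← hA_mul g g⁻¹ z hz, mul_inv_cancel, hA_one z hz]
  have hkey : ∀ (g : G), ∀ z ∈ UD, 1 - Complex.abs (A g z) ^ 2
      = (1 - Complex.abs z ^ 2) * Complex.abs (deriv (A g) z) := by
    intro g z hz
    have hz' : Complex.abs z < 1 := mem_UD.mp hz
    have hw := hmemA g z hz
    have hw' : Complex.abs (A g z) < 1 := mem_UD.mp hw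
    have h1 := sp_deriv (φ := A g) (hA_holo g) (hA_bij g).mapsTo hz'
    have h2 := sp_deriv (φ := A g⁻¹) (hA_holo g⁻¹) (hA_bij g⁻¹).mapsTo hw'
    rw [hInv g z hz] at h2
    have hd1 : DifferentiableAt ℂ (A g) z :=
      (hA_holo g).differentiableAt (hUDopen.mem_nhds hz)
    have hd2 : DifferentiableAt ℂ (A g⁻¹) (A g z) :=
      (hA_holo g⁻¹).differentiableAt (hUDopen.mem_nhds hw)
    have hcomp : deriv (A g⁻¹ ∘ A g) z = deriv (A g⁻¹) (A g z) * deriv (A g) z :=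
      deriv_comp (x := z) hd2 hd1
    have hEq : (A g⁻¹ ∘ A g) =ᶠ[nhds z] id := by
      filter_upwards [hUDopen.mem_nhds hz] with x hx
      exact hInv g x hx
    have hone : deriv (A g⁻¹) (A g z) * deriv (A g) z = 1 := by
      rw [← hcomp, hEq.deriv_eq, deriv_id]
    have habs1 : Complex.abs (deriv (A g⁻¹) (A g z)) * Complex.abs (deriv (A g) z) = 1 := by
      rw [← map_mul, hone, map_one]
    have hX : 0 < 1 - Complex.abs z ^ 2 := one_sub_sq_pos hz
    have hY : 0 < 1 - Complex.abs (A g z) ^ 2 := one_sub_sq_pos hw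
    nlinarith [Complex.abs.nonneg (deriv (A g) z), Complex.abs.nonneg (deriv (A g⁻¹) (A g z)),
      mul_le_mul_of_nonneg_left h2 (Complex.abs.nonneg (deriv (A g) z))]
  have hDpos : ∀ (g : G), ∀ z ∈ UD, 0 < Complex.abs (deriv (A g) z) := by
    intro g z hz
    have hk := hkey g z hz
    have hX := one_sub_sq_pos hz
    have hY := one_sub_sq_pos (hmemA g z hz)
    nlinarith [Complex.abs.nonneg (deriv (A g) z)]
  have habsT : ∀ (g : G), ∀ z ∈ UD, Complex.abs (f (A g z) * (ρ g z)⁻¹)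
      = Complex.abs (f (A g z)) * Complex.abs (deriv (A g) z) ^ s := by
    intro g z hz
    rw [map_mul, map_inv₀, hρ_s g z hz, Real.rpow_neg (Complex.abs.nonneg _), inv_inv]
  set W : ℂ → ENNReal :=
    fun z => ENNReal.ofReal ((1 - Complex.abs z ^ 2) ^ (s - 2) * Complex.abs (f z)) with hWdef
  set T : G → ℂ → ENNReal := fun g z => ENNReal.ofReal
    ((1 - Complex.abs z ^ 2) ^ (s - 2) * Complex.abs (f (A g z) * (ρ g z)⁻¹)) with hTdef
  have hwm : Measurable fun z : ℂ => (1 - Complex.abs z ^ 2) ^ (s - 2) :=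
    (measurable_rpow_const (s - 2)).comp
      (measurable_const.sub (Complex.continuous_abs.measurable.pow_const 2))
  have hWmeas : Measurable W :=
    (hwm.mul (Complex.continuous_abs.measurable.comp hf_meas)).ennreal_ofReal
  have hTae : ∀ (g : G) (E : Set ℂ), MeasurableSet E → E ⊆ UD →
      AEMeasurable (T g) (volume.restrict E) := by
    intro g E hEm hEsub
    have hA_ae : AEMeasurable (A g) (volume.restrict E) :=
      ((hA_holo g).continuousOn.mono hEsub).aemeasurable hEm
    have hρ_ae : AEMeasurable (ρ g) (volume.restrict E) :=
      ((hρ_holo g).continuousOn.mono hEsub).aemeasurable hEm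
    exact ((hwm.aemeasurable.mul (Complex.continuous_abs.measurable.comp_aemeasurable
      ((hf_meas.comp_aemeasurable hA_ae).mul hρ_ae.inv)))).ennreal_ofReal
  have hfd : ∀ (g : G) (E : Set ℂ), E ⊆ UD → ∀ x ∈ E, HasFDerivWithinAt (A g)
      ((ContinuousLinearMap.smulRight (1 : ℂ →L[ℂ] ℂ) (deriv (A g) x)).restrictScalars ℝ)
      E x := by
    intro g E hEsub x hx
    have hd : HasDerivAt (A g) (deriv (A g) x) x :=
      ((hA_holo g).differentiableAt (hUDopen.mem_nhds (hEsub hx))).hasDerivAt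
    exact ((hasDerivAt_iff_hasFDerivAt.mp hd).restrictScalars ℝ).hasFDerivWithinAt
  have himg_meas : ∀ (g : G) (E : Set ℂ), MeasurableSet E → E ⊆ UD →
      MeasurableSet (A g '' E) := fun g E hEm hEsub =>
    measurable_image_of_fderivWithin hEm (hfd g E hEsub) ((hA_bij g).injOn.mono hEsub)
  have himg_sub : ∀ (g : G) (E : Set ℂ), E ⊆ UD → A g '' E ⊆ UD := by
    intro g E hEsub z hz
    obtain ⟨x, hx, rfl⟩ := hz
    exact hmemA g x (hEsub hx)
  have hCoV : ∀ (g : G) (E : Set ℂ), MeasurableSet E → E ⊆ UD →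
      ∫⁻ z in A g '' E, W z = ∫⁻ z in E, T g z := by
    intro g E hEm hEsub
    rw [lintegral_image_eq_lintegral_abs_det_fderiv_mul volume hEm (hfd g E hEsub)
      ((hA_bij g).injOn.mono hEsub) W]
    apply setLIntegral_congr_fun hEm
    intro x hx
    have hxUD := hEsub hx
    have hD := hDpos g x hxUD
    have hX := one_sub_sq_pos hxUD
    have hY := one_sub_sq_pos (hmemA g x hxUD)
    beta_reduce
    rw [det_complex_smul]
    have habs2 : |Complex.normSq (deriv (A g) x)| = Complex.abs (deriv (A g) x) ^ (2:ℕ) := by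
      rw [_root_.abs_of_nonneg (Complex.normSq_nonneg _), ← Complex.sq_abs]
    rw [habs2]
    rw [hWdef, hTdef]
    simp only
    rw [← ENNReal.ofReal_mul (by positivity)]
    congr 1
    rw [habsT g x hxUD, hkey g x hxUD]
    rw [Real.mul_rpow hX.le hD.le]
    have e2 : Complex.abs (deriv (A g) x) ^ (2:ℕ)
        * Complex.abs (deriv (A g) x) ^ (s-2) = Complex.abs (deriv (A g) x) ^ s := by
      rw [← Real.rpow_natCast (Complex.abs (deriv (A g) x)) 2, ← Real.rpow_add hD]
      norm_num
    calc Complex.abs (deriv (A g) x) ^ (2:ℕ)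
          * ((1 - Complex.abs x ^ 2) ^ (s-2) * Complex.abs (deriv (A g) x) ^ (s-2)
            * Complex.abs (f (A g x)))
        = (1 - Complex.abs x ^ 2) ^ (s-2) * Complex.abs (f (A g x))
          * (Complex.abs (deriv (A g) x) ^ (2:ℕ) * Complex.abs (deriv (A g) x) ^ (s-2)) := by
          ring
      _ = (1 - Complex.abs x ^ 2) ^ (s-2)
            * (Complex.abs (f (A g x)) * Complex.abs (deriv (A g) x) ^ s) := by
          rw [e2]; ring
  -- L1 : unfolding over the fundamental domain
  have hNM : ∀ g : G, NullMeasurableSet (A g '' F) volume :=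
    fun g => (himg_meas g F hF_meas hF_sub).nullMeasurableSet
  have hdisj : Pairwise (Function.onFun (AEDisjoint volume) fun g : G => A g '' F) := by
    intro g h hgh
    exact hF_disj g h hgh
  have hL1 : ∑' g : G, ∫⁻ z in F, T g z ≤ ∫⁻ z in UD, W z := by
    have : ∀ g : G, ∫⁻ z in F, T g z = ∫⁻ z in A g '' F, W z := fun g =>
      (hCoV g F hF_meas hF_sub).symm
    calc ∑' g : G, ∫⁻ z in F, T g z = ∑' g : G, ∫⁻ z in A g '' F, W z := by
          exact tsum_congr this
      _ = ∫⁻ z in ⋃ g : G, A g '' F, W z := (lintegral_iUnion₀ hNM hdisj W).symm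
      _ ≤ ∫⁻ z in UD, W z := lintegral_mono_set (Set.iUnion_subset fun g =>
          himg_sub g F hF_sub)
  have hL1fin : ∑' g : G, ∫⁻ z in F, T g z < ⊤ := lt_of_le_of_lt hL1 hf_int
  -- transfer of summability
  have hterm_eq : ∀ (g h : G), ∀ y ∈ UD, f (A h (A g y)) * (ρ h (A g y))⁻¹
      = ρ g y * (f (A (h*g) y) * (ρ (h*g) y)⁻¹) := by
    intro g h y hy
    rw [← hA_mul h g y hy]
    have hco := hρ_cocycle h g y hy
    have h1 : ρ g y ≠ 0 := hρ_ne g y hy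
    have h2 : ρ (h*g) y ≠ 0 := hρ_ne (h*g) y hy
    have h3 : ρ h (A g y) ≠ 0 := hρ_ne h (A g y) (hmemA g y hy)
    have hiv : (ρ h (A g y))⁻¹ = ρ g y * (ρ (h*g) y)⁻¹ := by
      rw [hco, mul_inv, mul_comm ((ρ h (A g y))⁻¹) _, ← mul_assoc,
        mul_inv_cancel₀ h1, one_mul]
    rw [hiv]
    ring
  have hGoodTrans : ∀ (g : G), ∀ y ∈ UD,
      Summable (fun h : G => Complex.abs (f (A h y) * (ρ h y)⁻¹)) →
      Summable (fun h : G => Complex.abs (f (A h (A g y)) * (ρ h (A g y))⁻¹)) := by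
    intro g y hy hsum
    have h1 : Summable (fun h : G => Complex.abs (f (A (h*g) y) * (ρ (h*g) y)⁻¹)) := by
      have h0 := (Equiv.summable_iff (Equiv.mulRight g)
        (f := fun h : G => Complex.abs (f (A h y) * (ρ h y)⁻¹))).mpr hsum
      simpa [Function.comp_def] using h0
    have h2 := h1.mul_right (Complex.abs (ρ g y))
    apply h2.congr
    intro h
    simp only [hterm_eq g h y hy, map_mul, map_inv₀]
    ring
  -- a.e. summability on F
  have hsumF : ∀ᵐ z ∂volume.restrict F, ∑' g : G, T g z ≠ ⊤ := by
    have hint : ∫⁻ z in F, ∑' g : G, T g z = ∑' g : G, ∫⁻ z in F, T g z :=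
      lintegral_tsum fun g => hTae g F hF_meas hF_sub
    have : ∫⁻ z in F, ∑' g : G, T g z ≠ ⊤ := by rw [hint]; exact hL1fin.ne
    exact ae_lt_top' (AEMeasurable.ennreal_tsum fun g => hTae g F hF_meas hF_sub) this
      |>.mono fun z hz => hz.ne
  have hGoodOf : ∀ z ∈ UD, (∑' g : G, T g z ≠ ⊤) →
      Summable (fun g : G => Complex.abs (f (A g z) * (ρ g z)⁻¹)) := by
    intro z hz hne
    have hw : 0 < (1 - Complex.abs z ^ 2) ^ (s - 2) :=
      Real.rpow_pos_of_pos (one_sub_sq_pos hz) _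
    have hsum0 : Summable fun g : G => (T g z).toReal := ENNReal.summable_toReal hne
    have hsum1 : Summable fun g : G =>
        (1 - Complex.abs z ^ 2) ^ (s - 2) * Complex.abs (f (A g z) * (ρ g z)⁻¹) := by
      apply hsum0.congr
      intro g
      rw [hTdef]
      simp only
      rw [ENNReal.toReal_ofReal (mul_nonneg (Real.rpow_nonneg
        (one_sub_sq_pos ?_).le _) (Complex.abs.nonneg _))]
      exact hz
    have := hsum1.mul_left ((1 - Complex.abs z ^ 2) ^ (s - 2))⁻¹
    apply this.congr
    intro g
    field_simp
  -- (i)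
  have hconc1 : ∀ᵐ z ∂volume.restrict UD,
      Summable fun g : G => Complex.abs (f (A g z) * (ρ g z)⁻¹) := by
    rw [MeasureTheory.ae_iff]
    rw [Measure.restrict_apply' hUDmeas]
    set Bad := {z : ℂ | ¬ Summable fun g : G => Complex.abs (f (A g z) * (ρ g z)⁻¹)} with hBad
    have hFBad : volume (Bad ∩ F) = 0 := by
      have h0 : volume.restrict F {z : ℂ | ¬ (∑' g : G, T g z ≠ ⊤)} = 0 := by
        rw [← MeasureTheory.ae_iff]
        exact hsumF
      rw [Measure.restrict_apply' hF_meas] at h0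
      apply measure_mono_null _ h0
      intro z hz
      refine ⟨?_, hz.2⟩
      simp only [Set.mem_setOf_eq, not_not]
      by_contra hcon
      exact hz.1 (hGoodOf z (hF_sub hz.2) hcon)
    have hincl : Bad ∩ UD ⊆ (UD \ ⋃ g : G, A g '' F) ∪ ⋃ g : G, A g '' (Bad ∩ F) := by
      intro z hz
      by_cases hmem : z ∈ ⋃ g : G, A g '' F
      · right
        rw [Set.mem_iUnion] at hmem
        obtain ⟨g, y, hyF, rfl⟩ := hmem
        refine Set.mem_iUnion.mpr ⟨g, y, ⟨?_, hyF⟩, rfl⟩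
        intro hGood
        exact hz.1 (hGoodTrans g y (hF_sub hyF) hGood)
      · exact Or.inl ⟨hz.2, hmem⟩
    apply measure_mono_null hincl
    apply measure_union_null hF_cover
    apply measure_iUnion_null
    intro g
    apply addHaar_image_eq_zero_of_differentiableOn_of_addHaar_eq_zero volume
    · exact ((hA_holo g).restrictScalars ℝ).mono fun z hz => hF_sub hz.2
    · exact hFBad
  -- (ii)
  have hconc2 : ∀ g : G, ∀ z ∈ UD,
      (∑' h : G, f (A h (A g z)) * (ρ h (A g z))⁻¹)
        = ρ g z * ∑' h : G, f (A h z) * (ρ h z)⁻¹ := by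
    intro g z hz
    calc (∑' h : G, f (A h (A g z)) * (ρ h (A g z))⁻¹)
        = ∑' h : G, ρ g z * (f (A (h*g) z) * (ρ (h*g) z)⁻¹) := by
          exact tsum_congr fun h => hterm_eq g h z hz
      _ = ρ g z * ∑' h : G, f (A (h*g) z) * (ρ (h*g) z)⁻¹ := tsum_mul_left
      _ = ρ g z * ∑' h : G, f (A h z) * (ρ h z)⁻¹ := by
          congr 1
          have h0 := Equiv.tsum_eq (Equiv.mulRight g) (f := fun h : G => f (A h z) * (ρ h z)⁻¹)
          simpa [Function.comp_def] using h0
  -- (iii) norm inequality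
  have hconc3 : ∫⁻ z in F, ENNReal.ofReal ((1 - Complex.abs z ^ 2) ^ (s - 2)
        * Complex.abs (∑' g : G, f (A g z) * (ρ g z)⁻¹))
      ≤ ∫⁻ z in UD, W z := by
    have hpt : ∀ z ∈ F, ENNReal.ofReal ((1 - Complex.abs z ^ 2) ^ (s - 2)
        * Complex.abs (∑' g : G, f (A g z) * (ρ g z)⁻¹)) ≤ ∑' g : G, T g z := by
      intro z hzF
      have hz := hF_sub hzF
      have hw : 0 ≤ (1 - Complex.abs z ^ 2) ^ (s - 2) :=
        Real.rpow_nonneg (one_sub_sq_pos hz).le _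
      by_cases hsum : Summable fun g : G => Complex.abs (f (A g z) * (ρ g z)⁻¹)
      · have hb : Complex.abs (∑' g : G, f (A g z) * (ρ g z)⁻¹)
            ≤ ∑' g : G, Complex.abs (f (A g z) * (ρ g z)⁻¹) := by
          simpa only [Complex.norm_eq_abs] using
            norm_tsum_le_tsum_norm (f := fun g : G => f (A g z) * (ρ g z)⁻¹)
              (by simpa only [Complex.norm_eq_abs] using hsum)
        calc ENNReal.ofReal ((1 - Complex.abs z ^ 2) ^ (s - 2)
              * Complex.abs (∑' g : G, f (A g z) * (ρ g z)⁻¹))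
            ≤ ENNReal.ofReal ((1 - Complex.abs z ^ 2) ^ (s - 2)
              * ∑' g : G, Complex.abs (f (A g z) * (ρ g z)⁻¹)) := by
              apply ENNReal.ofReal_le_ofReal
              exact mul_le_mul_of_nonneg_left hb hw
          _ = ENNReal.ofReal (∑' g : G, (1 - Complex.abs z ^ 2) ^ (s - 2)
              * Complex.abs (f (A g z) * (ρ g z)⁻¹)) := by rw [tsum_mul_left]
          _ = ∑' g : G, T g z := by
              rw [ENNReal.ofReal_tsum_of_nonneg (fun g => mul_nonneg hw
                (Complex.abs.nonneg _)) (hsum.mul_left _)]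
      · have hzero : (∑' g : G, f (A g z) * (ρ g z)⁻¹) = 0 := by
          apply tsum_eq_zero_of_not_summable
          intro hcon
          apply hsum
          have := summable_norm_iff.mpr hcon
          simpa only [Complex.norm_eq_abs] using this
        rw [hzero]
        simp
    calc ∫⁻ z in F, ENNReal.ofReal ((1 - Complex.abs z ^ 2) ^ (s - 2)
          * Complex.abs (∑' g : G, f (A g z) * (ρ g z)⁻¹))
        ≤ ∫⁻ z in F, ∑' g : G, T g z := by
          apply lintegral_mono_ae
          filter_upwards [ae_restrict_mem hF_meas] with z hz using hpt z hz
      _ = ∑' g : G, ∫⁻ z in F, T g z := lintegral_tsum fun g => hTae g F hF_meas hF_sub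
      _ ≤ ∫⁻ z in UD, W z := hL1
  refine ⟨hconc1, hconc2, hconc3, ?_⟩
  intro hf_holo
  have hloc : ∀ z₀ ∈ UD, ∃ δ : ℝ, 0 < δ ∧ Metric.closedBall z₀ δ ⊆ UD ∧
      ∃ b : G → ℝ, Summable b ∧ (∀ g, 0 ≤ b g) ∧
        ∀ (g : G), ∀ z ∈ Metric.closedBall z₀ δ,
          Complex.abs (f (A g z) * (ρ g z)⁻¹) ≤ b g := by
    intro z₀ hz₀
    obtain ⟨U, hUsub, hUopen, hz₀U, hSfin⟩ := hA_proper z₀ hz₀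
    obtain ⟨ε', hε'pos, hballU⟩ := Metric.isOpen_iff.mp hUopen z₀ hz₀U
    set ε : ℝ := min (ε'/2) (1/2) with hεdef
    have hε0 : 0 < ε := lt_min (by linarith) (by norm_num)
    have hε12 : ε ≤ 1/2 := min_le_right _ _
    have hcb_sub_U : Metric.closedBall z₀ ε ⊆ U := by
      refine subset_trans (Metric.closedBall_subset_ball ?_) hballU
      calc ε ≤ ε'/2 := min_le_left _ _
        _ < ε' := by linarith
    have hcb_sub_UD : Metric.closedBall z₀ ε ⊆ UD := subset_trans hcb_sub_U hUsub
    set δ : ℝ := ε/4 with hδdef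
    have hδ0 : 0 < δ := by positivity
    have hδ18 : δ ≤ 1/8 := by rw [hδdef]; linarith
    set B : Set ℂ := Metric.ball z₀ ε with hBdef
    have hB_sub_U : B ⊆ U := subset_trans Metric.ball_subset_closedBall hcb_sub_U
    have hB_sub_UD : B ⊆ UD := subset_trans hB_sub_U hUsub
    have hB_meas : MeasurableSet B := Metric.isOpen_ball.measurableSet
    have hδcb : Metric.closedBall z₀ δ ⊆ UD :=
      subset_trans (Metric.closedBall_subset_closedBall (by linarith)) hcb_sub_UD
    -- |z₀| + ε < 1
    have habs_z₀ε : Complex.abs z₀ + ε < 1 := by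
      have hp : ∃ p : ℂ, p ∈ Metric.closedBall z₀ ε
          ∧ Complex.abs p = Complex.abs z₀ + ε := by
        by_cases hz0 : z₀ = 0
        · refine ⟨(ε:ℂ), ?_, ?_⟩
          · rw [Metric.mem_closedBall, hz0, dist_zero_right, Complex.norm_eq_abs,
              Complex.abs_ofReal, abs_of_pos hε0]
          · rw [hz0, Complex.abs_ofReal, abs_of_pos hε0, map_zero, zero_add]
        · have hz0' : 0 < Complex.abs z₀ := Complex.abs.pos hz0
          refine ⟨((1 + ε / Complex.abs z₀ : ℝ) : ℂ) * z₀, ?_, ?_⟩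
          · rw [Metric.mem_closedBall, Complex.dist_eq]
            have he : ((1 + ε / Complex.abs z₀ : ℝ) : ℂ) * z₀ - z₀
                = ((ε / Complex.abs z₀ : ℝ) : ℂ) * z₀ := by push_cast; ring
            rw [he, Complex.norm_eq_abs, map_mul, Complex.abs_ofReal, abs_of_pos (by positivity)]
            rw [div_mul_cancel₀ _ hz0'.ne']
          · rw [map_mul, Complex.abs_ofReal, abs_of_pos (by positivity)]
            field_simp
      obtain ⟨p, hpmem, hpabs⟩ := hp
      have hlt := mem_UD.mp (hcb_sub_UD hpmem)
      rwa [hpabs] at hlt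
    set m : ℝ := 1 - (Complex.abs z₀ + δ)^2 with hmdef
    have hm0 : 0 < m := by
      have : Complex.abs z₀ + δ < 1 := by
        rw [hδdef]; nlinarith [Complex.abs.nonneg z₀]
      nlinarith [Complex.abs.nonneg z₀, hδ0]
    have hm_le : ∀ z ∈ Metric.closedBall z₀ δ, m ≤ 1 - Complex.abs z ^ 2 := by
      intro z hz
      rw [Metric.mem_closedBall, Complex.dist_eq, Complex.norm_eq_abs] at hz
      have h1 : Complex.abs z ≤ Complex.abs z₀ + δ := by
        calc Complex.abs z = Complex.abs (z₀ + (z - z₀)) := by ring_nf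
          _ ≤ Complex.abs z₀ + Complex.abs (z - z₀) := Complex.abs.add_le _ _
          _ ≤ Complex.abs z₀ + δ := by linarith
      nlinarith [Complex.abs.nonneg z, Complex.abs.nonneg z₀, hδ0]
    -- multiplicity bound
    set N : ℕ := hSfin.toFinset.card with hNdef
    have hmul : ∀ ζ : ℂ, ∑' g : G, (A g '' B).indicator W ζ
        ≤ (N : ENNReal) * (UD.indicator W ζ) := by
      intro ζ
      by_cases hT0 : ∃ g₀ : G, ζ ∈ A g₀ '' B
      · obtain ⟨g₀, hg₀⟩ := hT0
        have hζUD : ζ ∈ UD := himg_sub g₀ B hB_sub_UD hg₀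
        set Tset : Set G := {g : G | ζ ∈ A g '' B} with hTset
        have hTsub : Tset ⊆ (fun k => g₀ * k) '' {g : G | (A g '' U ∩ U).Nonempty} := by
          intro g hg
          obtain ⟨b1, hb1, hb1e⟩ := hg
          obtain ⟨b0, hb0, hb0e⟩ := hg₀
          refine ⟨g₀⁻¹ * g, ⟨b0, ⟨b1, hB_sub_U hb1, ?_⟩, hB_sub_U hb0⟩, by group⟩
          have h1 : A (g₀⁻¹ * g) b1 = A g₀⁻¹ (A g b1) := hA_mul _ _ _ (hB_sub_UD hb1)
          rw [h1, hb1e, ← hb0e, hInv g₀ b0 (hB_sub_UD hb0)]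
        have hTfin : Tset.Finite := (hSfin.image (fun k => g₀ * k)).subset hTsub
        have hcard : hTfin.toFinset.card ≤ N := by
          rw [hNdef]
          have h1 : hTfin.toFinset ⊆ Finset.image (fun k => g₀ * k) hSfin.toFinset := by
            intro g hg
            rw [Set.Finite.mem_toFinset] at hg
            obtain ⟨k, hk, hke⟩ := hTsub hg
            rw [Finset.mem_image]
            exact ⟨k, (Set.Finite.mem_toFinset _).mpr hk, hke⟩
          calc hTfin.toFinset.card
              ≤ (Finset.image (fun k => g₀ * k) hSfin.toFinset).card :=
                Finset.card_le_card h1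
            _ ≤ hSfin.toFinset.card := Finset.card_image_le
        calc ∑' g : G, (A g '' B).indicator W ζ
            = ∑ g ∈ hTfin.toFinset, (A g '' B).indicator W ζ := by
              apply tsum_eq_sum
              intro g hg
              rw [Set.Finite.mem_toFinset] at hg
              exact Set.indicator_of_notMem (by simpa [hTset] using hg) _
          _ ≤ ∑ _g ∈ hTfin.toFinset, W ζ := by
              apply Finset.sum_le_sum
              intro g _
              exact Set.indicator_le_self _ _ ζ
          _ = (hTfin.toFinset.card : ENNReal) * W ζ := by
              rw [Finset.sum_const, nsmul_eq_mul]
          _ ≤ (N : ENNReal) * W ζ := by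
              apply mul_le_mul_left
              exact_mod_cast Nat.cast_le.mpr hcard
          _ = (N : ENNReal) * UD.indicator W ζ := by
              rw [Set.indicator_of_mem hζUD]
      · push_neg at hT0
        have hz : ∀ g : G, (A g '' B).indicator W ζ = 0 := fun g =>
          Set.indicator_of_notMem (hT0 g) _
        simp only [hz, tsum_zero]
        exact zero_le
    set Q : G → ENNReal := fun g => ∫⁻ ζ in A g '' B, W ζ with hQdef
    have hQle : ∑' g : G, Q g ≤ (N : ENNReal) * ∫⁻ z in UD, W z := by
      have h1 : ∀ g : G, Q g = ∫⁻ ζ, (A g '' B).indicator W ζ := fun g =>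
        (lintegral_indicator (himg_meas g B hB_meas hB_sub_UD) W).symm
      calc ∑' g : G, Q g = ∑' g : G, ∫⁻ ζ, (A g '' B).indicator W ζ := tsum_congr h1
        _ = ∫⁻ ζ, ∑' g : G, (A g '' B).indicator W ζ := by
            refine (lintegral_tsum fun g => ?_).symm
            exact (hWmeas.indicator (himg_meas g B hB_meas hB_sub_UD)).aemeasurable
        _ ≤ ∫⁻ ζ, (N : ENNReal) * UD.indicator W ζ := lintegral_mono hmul
        _ = (N : ENNReal) * ∫⁻ ζ, UD.indicator W ζ :=
            lintegral_const_mul' _ _ (ENNReal.natCast_ne_top N)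
        _ = (N : ENNReal) * ∫⁻ z in UD, W z := by rw [lintegral_indicator hUDmeas]
    have hNfin : ((N : ENNReal) * ∫⁻ z in UD, W z) < ⊤ :=
      ENNReal.mul_lt_top (ENNReal.natCast_lt_top N) hf_int
    have hQfin : ∑' g : G, Q g ≠ ⊤ := (lt_of_le_of_lt hQle hNfin).ne
    set q : G → ℝ := fun g => (Q g).toReal with hqdef
    have hqsum : Summable q := ENNReal.summable_toReal hQfin
    have hqnn : ∀ g, 0 ≤ q g := fun g => ENNReal.toReal_nonneg
    have hQg_fin : ∀ g : G, Q g ≠ ⊤ := fun g =>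
      ((ENNReal.le_tsum g).trans_lt (lt_of_le_of_lt hQle hNfin)).ne
    set K₀ : ℝ := (1/2:ℝ)^s * (1/9) * (Real.pi/2) * (δ/2)^2 with hK₀def
    have hK₀0 : 0 < K₀ := by
      have h1 : (0:ℝ) < (1/2:ℝ)^s := Real.rpow_pos_of_pos (by norm_num) s
      have h2 := Real.pi_pos
      positivity
    have hms : 0 < m ^ s := Real.rpow_pos_of_pos hm0 s
    set C : ℝ := (2:ℝ)^s / m^s / K₀ with hCdef
    have hC0 : 0 < C := by
      have h1 : (0:ℝ) < (2:ℝ)^s := Real.rpow_pos_of_pos (by norm_num) s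
      positivity
    have hest : ∀ (g : G), ∀ z ∈ Metric.closedBall z₀ δ,
        Complex.abs (f (A g z) * (ρ g z)⁻¹) ≤ C * q g := by
      intro g z hzball
      have hzUD : z ∈ UD := hδcb hzball
      set w : ℂ := A g z with hwdef
      have hwUD : w ∈ UD := hmemA g z hzUD
      have hw1 : Complex.abs w < 1 := mem_UD.mp hwUD
      set lw : ℝ := 1 - Complex.abs w with hlwdef
      have hlw0 : 0 < lw := by rw [hlwdef]; linarith
      set η : ℝ := δ/2 * lw with hηdef
      have hη0 : 0 < η := by positivity
      have hη_le : η ≤ lw / 2 := by rw [hηdef]; nlinarith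
      have hball_UD : Metric.closedBall w η ⊆ UD := by
        intro ζ hζ
        rw [Metric.mem_closedBall, Complex.dist_eq, Complex.norm_eq_abs] at hζ
        rw [mem_UD]
        have h1 : Complex.abs ζ ≤ Complex.abs w + η := by
          calc Complex.abs ζ = Complex.abs (w + (ζ - w)) := by ring_nf
            _ ≤ Complex.abs w + Complex.abs (ζ - w) := Complex.abs.add_le _ _
            _ ≤ Complex.abs w + η := by linarith
        nlinarith
      have himg : Metric.ball w η ⊆ A g '' B := by
        intro ζ hζ
        rw [Metric.mem_ball, Complex.dist_eq] at hζ
        have hζUD : ζ ∈ UD := hball_UD (by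
          rw [Metric.mem_closedBall, Complex.dist_eq]; linarith)
        have hζ1 : Complex.abs ζ < 1 := mem_UD.mp hζUD
        have hconj_le : Complex.abs ((starRingEnd ℂ) w * ζ) ≤ Complex.abs w := by
          rw [map_mul, Complex.abs_conj]
          nlinarith [Complex.abs.nonneg w, Complex.abs.nonneg ζ]
        have hden : 1 - Complex.abs w ≤ Complex.abs (1 - (starRingEnd ℂ) w * ζ) := by
          have h2 : ‖(1:ℂ)‖ - ‖(starRingEnd ℂ) w * ζ‖ ≤ ‖(1:ℂ) - (starRingEnd ℂ) w * ζ‖ :=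
            norm_sub_norm_le _ _
          simp only [Complex.norm_eq_abs, map_one] at h2
          linarith
        have hmbwζ : Complex.abs (mb w ζ) < δ := by
          rw [mb, map_div₀]
          have hpos : 0 < Complex.abs (1 - (starRingEnd ℂ) w * ζ) :=
            lt_of_lt_of_le hlw0 hden
          rw [div_lt_iff₀ hpos]
          have h3 : Complex.abs (w - ζ) < η := by
            rw [Complex.abs.map_sub]
            exact hζ
          nlinarith [hδ0, hpos, hden, hlw0]
        set y : ℂ := A g⁻¹ ζ with hydef
        have hyUD : y ∈ UD := hmemA g⁻¹ ζ hζUD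
        have hinvw : A g⁻¹ w = z := hInv g z hzUD
        have hsp := sp_dist (φ := A g⁻¹) (hA_holo g⁻¹) (hA_bij g⁻¹).mapsTo hw1 hζ1
        rw [hinvw] at hsp
        have hmbzy : Complex.abs (mb z y) < δ := lt_of_le_of_lt hsp hmbwζ
        have hz1 : Complex.abs z < 1 := mem_UD.mp hzUD
        have hy1 : Complex.abs y < 1 := mem_UD.mp hyUD
        have hyz : Complex.abs (z - y) ≤ 2 * δ := by
          have hdne : (1 - (starRingEnd ℂ) z * y) ≠ 0 := mb_denom_ne hz1 hy1.le
          have hfac : z - y = mb z y * (1 - (starRingEnd ℂ) z * y) := by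
            rw [mb]; rw [div_mul_cancel₀ _ hdne]
          rw [hfac, map_mul]
          have hub : Complex.abs (1 - (starRingEnd ℂ) z * y) ≤ 2 := by
            have h4 : ‖(1:ℂ) - (starRingEnd ℂ) z * y‖ ≤ ‖(1:ℂ)‖ + ‖(starRingEnd ℂ) z * y‖ :=
              norm_sub_le _ _
            simp only [Complex.norm_eq_abs, map_one, map_mul, Complex.abs_conj] at h4
            nlinarith [Complex.abs.nonneg z, Complex.abs.nonneg y]
          nlinarith [Complex.abs.nonneg (mb z y), Complex.abs.nonneg
            (1 - (starRingEnd ℂ) z * y)]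
        have hyB : y ∈ B := by
          rw [hBdef, Metric.mem_ball, Complex.dist_eq]
          rw [Metric.mem_closedBall, Complex.dist_eq, Complex.norm_eq_abs] at hzball
          have h5 : Complex.abs (y - z₀) ≤ Complex.abs (y - z) + Complex.abs (z - z₀) := by
            calc Complex.abs (y - z₀) = Complex.abs ((y - z) + (z - z₀)) := by ring_nf
              _ ≤ _ := Complex.abs.add_le _ _
          have h6 : Complex.abs (y - z) = Complex.abs (z - y) :=
            AbsoluteValue.map_sub Complex.abs y z
          rw [hδdef] at *
          calc Complex.abs (y - z₀) ≤ Complex.abs (y - z) + Complex.abs (z - z₀) := h5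
            _ ≤ 2 * (ε/4) + ε/4 := by rw [h6]; linarith
            _ < ε := by linarith
        exact ⟨y, hyB, hInv' g ζ hζUD⟩
      -- weight comparison on the small ball
      have hcomp : ∀ ζ ∈ Metric.ball w η,
          ENNReal.ofReal ((1/2:ℝ)^s * (1/9) * lw ^ (s-2) * Complex.abs (f ζ)) ≤ W ζ := by
        intro ζ hζb
        rw [Metric.mem_ball, Complex.dist_eq, Complex.norm_eq_abs] at hζb
        have habs_le : Complex.abs ζ ≤ Complex.abs w + η := by
          calc Complex.abs ζ = Complex.abs (w + (ζ - w)) := by ring_nf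
            _ ≤ Complex.abs w + Complex.abs (ζ - w) := Complex.abs.add_le _ _
            _ ≤ _ := by linarith
        have habs_ge : Complex.abs w - η ≤ Complex.abs ζ := by
          have h7 : ‖w‖ - ‖ζ‖ ≤ ‖w - ζ‖ := norm_sub_norm_le _ _
          have h8 : Complex.abs (w - ζ) = Complex.abs (ζ - w) :=
            AbsoluteValue.map_sub Complex.abs w ζ
          simp only [Complex.norm_eq_abs] at h7
          rw [h8] at h7
          linarith
        have hζ1 : Complex.abs ζ < 1 := by nlinarith
        set X : ℝ := 1 - Complex.abs ζ ^ 2 with hXdef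
        have hX1 : lw/2 ≤ X := by
          rw [hXdef, hlwdef]
          nlinarith [Complex.abs.nonneg ζ, Complex.abs.nonneg w]
        have hX2 : X ≤ 3 * lw := by
          rw [hXdef, hlwdef]
          nlinarith [Complex.abs.nonneg ζ, Complex.abs.nonneg w]
        have hX0 : 0 < X := lt_of_lt_of_le (by positivity) hX1
        have hsubX : X ^ (s - 2) = X ^ s / X ^ (2:ℕ) := by
          rw [Real.rpow_sub hX0]
          congr 1
          rw [← Real.rpow_natCast X 2]
          norm_num
        have hsublw : lw ^ (s - 2) = lw ^ s / lw ^ (2:ℕ) := by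
          rw [Real.rpow_sub hlw0]
          congr 1
          rw [← Real.rpow_natCast lw 2]
          norm_num
        have hq1 : (1/2:ℝ)^s * (1/9) * lw ^ (s-2) ≤ X ^ (s-2) := by
          rw [hsubX, hsublw]
          have hmul' : ((1/2:ℝ) * lw)^s = (1/2:ℝ)^s * lw^s :=
            Real.mul_rpow (by norm_num) hlw0.le
          have hXs : ((1/2:ℝ) * lw) ^ s ≤ X ^ s :=
            Real.rpow_le_rpow (by positivity) (by linarith) hs0.le
          have hX2' : X^(2:ℕ) ≤ (3*lw)^(2:ℕ) := pow_le_pow_left₀ hX0.le hX2 2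
          calc (1/2:ℝ)^s * (1/9) * (lw^s / lw^(2:ℕ))
              = ((1/2:ℝ)*lw)^s / ((3*lw)^(2:ℕ)) := by
                rw [hmul']; field_simp; ring
            _ ≤ X^s / X^(2:ℕ) :=
                div_le_div₀ (Real.rpow_nonneg hX0.le s) hXs (pow_pos hX0 2) hX2'
        rw [hWdef]
        simp only
        apply ENNReal.ofReal_le_ofReal
        exact mul_le_mul_of_nonneg_right hq1 (Complex.abs.nonneg _)
      have hcnn : 0 ≤ (1/2:ℝ)^s * (1/9) * lw ^ (s-2) := by
        have := Real.rpow_nonneg hlw0.le (s-2)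
        have h1 : (0:ℝ) ≤ (1/2:ℝ)^s := Real.rpow_nonneg (by norm_num) s
        positivity
      have hchain : ENNReal.ofReal ((1/2:ℝ)^s * (1/9) * lw ^ (s-2))
          * ENNReal.ofReal (Real.pi/2 * η^2 * Complex.abs (f w)) ≤ Q g := by
        calc ENNReal.ofReal ((1/2:ℝ)^s * (1/9) * lw ^ (s-2))
              * ENNReal.ofReal (Real.pi/2 * η^2 * Complex.abs (f w))
            ≤ ENNReal.ofReal ((1/2:ℝ)^s * (1/9) * lw ^ (s-2))
              * ∫⁻ ζ in Metric.ball w η, ENNReal.ofReal (Complex.abs (f ζ)) := by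
              apply mul_le_mul_right
              exact meanBound hη0 (hf_holo.mono hball_UD)
          _ = ∫⁻ ζ in Metric.ball w η, ENNReal.ofReal ((1/2:ℝ)^s * (1/9) * lw ^ (s-2))
              * ENNReal.ofReal (Complex.abs (f ζ)) :=
              (lintegral_const_mul' _ _ ENNReal.ofReal_ne_top).symm
          _ ≤ ∫⁻ ζ in Metric.ball w η, W ζ := by
              apply lintegral_mono_ae
              filter_upwards [ae_restrict_mem measurableSet_ball] with ζ hζ
              rw [← ENNReal.ofReal_mul hcnn]
              exact hcomp ζ hζ
          _ ≤ Q g := lintegral_mono_set himg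
      have hnn2 : 0 ≤ Real.pi/2 * η^2 * Complex.abs (f w) := by
        have := Real.pi_pos
        positivity
      have hreal : ((1/2:ℝ)^s * (1/9) * lw ^ (s-2))
          * (Real.pi/2 * η^2 * Complex.abs (f w)) ≤ q g := by
        have hof : ENNReal.ofReal (((1/2:ℝ)^s * (1/9) * lw ^ (s-2))
            * (Real.pi/2 * η^2 * Complex.abs (f w))) ≤ Q g := by
          rw [ENNReal.ofReal_mul hcnn]
          exact hchain
        have h3 := ENNReal.toReal_mono (hQg_fin g) hof
        rwa [ENNReal.toReal_ofReal (mul_nonneg hcnn hnn2)] at h3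
      -- final algebra
      have hXz : 0 < 1 - Complex.abs z ^ 2 := one_sub_sq_pos hzUD
      have hYw : 0 < 1 - Complex.abs w ^ 2 := one_sub_sq_pos hwUD
      have hDval : Complex.abs (deriv (A g) z)
          = (1 - Complex.abs w ^ 2) / (1 - Complex.abs z ^ 2) := by
        rw [eq_div_iff hXz.ne', mul_comm]
        exact (hkey g z hzUD).symm
      rw [habsT g z hzUD, ← hwdef, hDval]
      have hYle : 1 - Complex.abs w ^ 2 ≤ 2 * lw := by
        rw [hlwdef]
        nlinarith [Complex.abs.nonneg w]
      have hXge : m ≤ 1 - Complex.abs z ^ 2 := hm_le z hzball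
      have hds : ((1 - Complex.abs w ^ 2)/(1 - Complex.abs z ^ 2)) ^ s
          ≤ (2*lw)^s / m^s := by
        rw [Real.div_rpow hYw.le hXz.le]
        exact div_le_div₀ (Real.rpow_nonneg (by positivity) s)
          (Real.rpow_le_rpow hYw.le hYle hs0.le) (Real.rpow_pos_of_pos hm0 s)
          (Real.rpow_le_rpow hm0.le hXge hs0.le)
      have h2lw : (2*lw)^s = 2^s * lw^s := Real.mul_rpow (by norm_num) hlw0.le
      have hη2 : η^2 = (δ/2)^2 * lw^(2:ℕ) := by rw [hηdef]; ring
      have hlws : lw^(s-2) * lw^(2:ℕ) = lw^s := by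
        rw [← Real.rpow_natCast lw 2, ← Real.rpow_add hlw0]
        norm_num
      have hreal2 : K₀ * (lw^s * Complex.abs (f w)) ≤ q g := by
        calc K₀ * (lw^s * Complex.abs (f w))
            = ((1/2:ℝ)^s * (1/9) * lw ^ (s-2))
              * (Real.pi/2 * η^2 * Complex.abs (f w)) := by
              rw [hη2, ← hlws, hK₀def]; ring
          _ ≤ q g := hreal
      have h2s : (0:ℝ) < (2:ℝ)^s := Real.rpow_pos_of_pos (by norm_num) s
      calc Complex.abs (f w) * ((1 - Complex.abs w ^ 2)/(1 - Complex.abs z ^ 2)) ^ s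
          ≤ Complex.abs (f w) * ((2^s * lw^s) / m^s) := by
            apply mul_le_mul_of_nonneg_left _ (Complex.abs.nonneg _)
            rw [← h2lw]
            exact hds
        _ = ((2:ℝ)^s / m^s / K₀) * (K₀ * (lw^s * Complex.abs (f w))) := by
            field_simp
        _ ≤ ((2:ℝ)^s / m^s / K₀) * q g := by
            apply mul_le_mul_of_nonneg_left hreal2
            positivity
        _ = C * q g := by rw [hCdef]
    exact ⟨δ, hδ0, hδcb, fun g => C * q g, hqsum.mul_left C,
      fun g => mul_nonneg hC0.le (hqnn g), hest⟩
  constructor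
  · -- summability of sups over compacts
    intro K hKsub hKcomp
    choose δf hδ0f hδcbf bf hbsumf hbnnf hbdf using hloc
    have hcover : K ⊆ ⋃ zk : K, Metric.ball (zk : ℂ) (δf zk (hKsub zk.property)) := by
      intro z hz
      exact Set.mem_iUnion.mpr ⟨⟨z, hz⟩, Metric.mem_ball_self (hδ0f z (hKsub hz))⟩
    obtain ⟨t, ht⟩ := hKcomp.elim_finite_subcover
      (fun zk : K => Metric.ball (zk : ℂ) (δf zk (hKsub zk.property)))
      (fun zk => Metric.isOpen_ball) hcover
    set bb : G → ℝ := fun g => ∑ i ∈ t, bf i (hKsub i.property) g with hbb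
    have hbbsum : Summable bb := summable_sum fun i _ => hbsumf i (hKsub i.property)
    have hbbnn : ∀ g, 0 ≤ bb g := fun g =>
      Finset.sum_nonneg fun i _ => hbnnf i (hKsub i.property) g
    apply Summable.of_nonneg_of_le _ _ hbbsum
    · intro g
      exact Real.iSup_nonneg fun z => Real.iSup_nonneg fun _ => Complex.abs.nonneg _
    · intro g
      apply Real.iSup_le _ (hbbnn g)
      intro z
      apply Real.iSup_le _ (hbbnn g)
      intro hzK
      obtain ⟨i, hit, hzi⟩ := Set.mem_iUnion₂.mp (ht hzK)
      have h1 : Complex.abs (f (A g z) * (ρ g z)⁻¹) ≤ bf i (hKsub i.property) g :=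
        hbdf i (hKsub i.property) g z (Metric.ball_subset_closedBall hzi)
      calc Complex.abs (f (A g z) * (ρ g z)⁻¹) ≤ bf i (hKsub i.property) g := h1
        _ ≤ bb g := Finset.single_le_sum (f := fun i : ↥K => bf ↑i (hKsub i.property) g)
            (fun j _ => hbnnf ↑j (hKsub j.property) g) hit
  · -- differentiability
    have hterm_diff : ∀ g : G, DifferentiableOn ℂ (fun z => f (A g z) * (ρ g z)⁻¹) UD :=
      fun g => (hf_holo.comp (hA_holo g) (hA_bij g).mapsTo).mul
        ((hρ_holo g).inv (hρ_ne g))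
    intro z₀ hz₀
    obtain ⟨δ, hδ0, hcb, b, hbsum, hbnn, hbd⟩ := hloc z₀ hz₀
    have hsub' : Metric.ball z₀ δ ⊆ UD := subset_trans Metric.ball_subset_closedBall hcb
    have hd := differentiableOn_tsum_of_summable_norm hbsum
      (fun g => (hterm_diff g).mono hsub') Metric.isOpen_ball
      (fun g w hw => by
        rw [Complex.norm_eq_abs]
        exact hbd g w (Metric.ball_subset_closedBall hw))
    exact (hd.differentiableAt (Metric.isOpen_ball.mem_nhds
      (Metric.mem_ball_self hδ0))).differentiableWithinAt
end

section
/- Let s > 1 and let ρ be an s-factor of automorphy for G. Let f be a measurable automorphic form for ρ with ‖f‖_{L^∞_s(𝔻,G)} = ess sup_{z∈𝔻} λ(z)^{−s}|f(z)| < ∞, and let h : 𝔻 → ℂ be measurable with ∫_𝔻 λ(z)^{2−s}|h(z)| d²z < ∞. Then both integrals below converge absolutely and ⟨f, Θ_ρ[h]⟩^G_s = ∫_𝔻 f(w)·conj(h(w))·λ(w)^{2−2s} d²w. -/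
open MeasureTheory

open Metric Set Filter Topology Complex

lemma mem_UD_iff {z : ℂ} : z ∈ UD ↔ ‖z‖ < 1 := by
  simp [UD, mem_ball_zero_iff]

lemma UD_open : IsOpen UD := Metric.isOpen_ball

lemma ofReal_norm_eq_coe_nnnorm {E : Type*} [SeminormedAddCommGroup E] (x : E) :
    ENNReal.ofReal ‖x‖ = (‖x‖₊ : ENNReal) := ENNReal.ofReal_eq_coe_nnreal _

lemma onesub_pos {z : ℂ} (hz : z ∈ UD) : 0 < 1 - ‖z‖ ^ 2 := by
  have h := mem_UD_iff.mp hz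
  nlinarith [norm_nonneg z]

/-- Möbius involution-ish map of the disc. -/
noncomputable def mo (a z : ℂ) : ℂ := (a - z) / (1 - (starRingEnd ℂ) a * z)

lemma mo_denom_ne {a z : ℂ} (ha : a ∈ UD) (hz : z ∈ UD) :
    1 - (starRingEnd ℂ) a * z ≠ 0 := by
  intro h
  have h1 : ‖(starRingEnd ℂ) a * z‖ < 1 := by
    rw [norm_mul, Complex.norm_conj]
    have := mem_UD_iff.mp ha; have := mem_UD_iff.mp hz
    nlinarith [norm_nonneg a, norm_nonneg z]
  have h2 : (starRingEnd ℂ) a * z = 1 := by linear_combination -h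
  rw [h2] at h1; simp at h1

lemma normSq_identity (a z : ℂ) :
    Complex.normSq (1 - (starRingEnd ℂ) a * z) - Complex.normSq (a - z)
      = (1 - Complex.normSq a) * (1 - Complex.normSq z) := by
  have h : ((Complex.normSq (1 - (starRingEnd ℂ) a * z) : ℂ))
      - (Complex.normSq (a - z) : ℂ)
      = (1 - (Complex.normSq a : ℂ)) * (1 - (Complex.normSq z : ℂ)) := by
    rw [← Complex.mul_conj, ← Complex.mul_conj, ← Complex.mul_conj, ← Complex.mul_conj]
    simp only [map_sub, map_mul, map_one, Complex.conj_conj]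
    ring
  exact_mod_cast h

lemma mo_maps {a z : ℂ} (ha : a ∈ UD) (hz : z ∈ UD) : mo a z ∈ UD := by
  rw [mem_UD_iff, mo, norm_div, div_lt_one]
  · have h := normSq_identity a z
    have h1 : Complex.normSq a < 1 := by
      have := mem_UD_iff.mp ha; rw [← Complex.sq_norm]; nlinarith [norm_nonneg a]
    have h2 : Complex.normSq z < 1 := by
      have := mem_UD_iff.mp hz; rw [← Complex.sq_norm]; nlinarith [norm_nonneg z]
    have h3 : Complex.normSq (a - z) < Complex.normSq (1 - (starRingEnd ℂ) a * z) := by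
      nlinarith
    have := norm_nonneg (a - z)
    have := norm_nonneg (1 - (starRingEnd ℂ) a * z)
    rw [← Complex.sq_norm, ← Complex.sq_norm] at h3
    nlinarith
  · exact (norm_pos_iff.mpr (mo_denom_ne ha hz))

lemma mo_self (a : ℂ) : mo a a = 0 := by simp [mo]

lemma mo_zero (a : ℂ) : mo a 0 = a := by simp [mo]

lemma mo_hasDerivAt {a z : ℂ} (h : 1 - (starRingEnd ℂ) a * z ≠ 0) :
    HasDerivAt (mo a) ((Complex.normSq a - 1) / (1 - (starRingEnd ℂ) a * z) ^ 2) z := by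
  have h1 : HasDerivAt (fun w => a - w) (-1) z := by
    simpa using (hasDerivAt_id z).const_sub a
  have h2 : HasDerivAt (fun w => 1 - (starRingEnd ℂ) a * w) (-((starRingEnd ℂ) a)) z := by
    simpa using ((hasDerivAt_id z).const_mul ((starRingEnd ℂ) a)).const_sub 1
  have := h1.div h2 h
  refine this.congr_deriv ?_
  have hns : ((Complex.normSq a : ℂ)) = (starRingEnd ℂ) a * a := by
    rw [← Complex.mul_conj]; ring
  rw [hns]; ring

lemma mo_diffOn {a : ℂ} (ha : a ∈ UD) : DifferentiableOn ℂ (mo a) UD := fun z hz =>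
  ((mo_hasDerivAt (mo_denom_ne ha hz)).differentiableAt).differentiableWithinAt

/-- Schwarz–Pick inequality on the unit disc. -/
lemma schwarz_pick {f : ℂ → ℂ} (hd : DifferentiableOn ℂ f UD) (hm : Set.MapsTo f UD UD)
    {z : ℂ} (hz : z ∈ UD) {f' : ℂ} (hf' : HasDerivAt f f' z) :
    ‖f'‖ * (1 - ‖z‖ ^ 2) ≤ 1 - ‖f z‖ ^ 2 := by
  set w := f z with hw
  have hwUD : w ∈ UD := hm hz
  set Φ : ℂ → ℂ := fun u => mo w (f (mo z u)) with hΦ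
  have hΦd : DifferentiableOn ℂ Φ UD := by
    apply DifferentiableOn.comp (mo_diffOn hwUD)
    · exact DifferentiableOn.comp hd (mo_diffOn hz) (fun u hu => mo_maps hz hu)
    · exact fun u hu => hm (mo_maps hz hu)
  have hΦm : Set.MapsTo Φ UD UD := fun u hu => mo_maps hwUD (hm (mo_maps hz hu))
  have hΦ0 : Φ 0 = 0 := by rw [hΦ]; simp [mo_zero, ← hw, mo_self]
  -- derivative of Φ at 0
  have h1 : HasDerivAt (mo z) ((Complex.normSq z - 1)) 0 := by
    have := mo_hasDerivAt (a := z) (z := 0) (by simp)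
    simpa using this
  have h2 : HasDerivAt f f' (mo z 0) := by rw [mo_zero]; exact hf'
  have h3 : HasDerivAt (mo w) ((Complex.normSq w - 1) / (1 - (starRingEnd ℂ) w * w) ^ 2) w :=
    mo_hasDerivAt (mo_denom_ne hwUD hwUD)
  have h4 : HasDerivAt Φ
      ((Complex.normSq w - 1) / (1 - (starRingEnd ℂ) w * w) ^ 2 * (f' * (Complex.normSq z - 1)))
      0 := by
    have h5 : HasDerivAt (fun u => f (mo z u)) (f' * (Complex.normSq z - 1)) 0 :=
      HasDerivAt.comp 0 h2 h1
    have h3' : HasDerivAt (mo w)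
        ((Complex.normSq w - 1) / (1 - (starRingEnd ℂ) w * w) ^ 2) ((fun u => f (mo z u)) 0) := by
      simp only [mo_zero, ← hw]; exact h3
    have h6 := HasDerivAt.comp 0 h3' h5
    exact h6
  -- Schwarz lemma
  have hball : UD = Metric.ball (0:ℂ) 1 := rfl
  have hs : ‖deriv Φ 0‖ ≤ 1 := by
    apply Complex.norm_deriv_le_one_of_mapsTo_ball (c := 0) (R := 1)
    · rw [← hball]; exact hΦd
    · rw [← hball, hΦ0]; exact hΦm.mono_right Metric.ball_subset_closedBall
    · norm_num
  rw [h4.deriv] at hs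
  -- compute
  have hwc : 1 - (starRingEnd ℂ) w * w = ((1 - Complex.normSq w : ℝ) : ℂ) := by
    rw [Complex.ofReal_sub, Complex.ofReal_one, ← Complex.mul_conj]; ring
  rw [norm_mul, norm_mul, norm_div, hwc] at hs
  have hnw : Complex.normSq w < 1 := by
    have := mem_UD_iff.mp hwUD; rw [← Complex.sq_norm]; nlinarith [norm_nonneg w]
  have hnz : Complex.normSq z < 1 := by
    have := mem_UD_iff.mp hz; rw [← Complex.sq_norm]; nlinarith [norm_nonneg z]
  have e1 : ‖(Complex.normSq w : ℂ) - 1‖ = 1 - Complex.normSq w := by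
    rw [show ((Complex.normSq w : ℂ) - 1) = (((Complex.normSq w - 1 : ℝ)) : ℂ) by push_cast; ring,
      Complex.norm_real, Real.norm_eq_abs, abs_of_nonpos (by linarith)]
    ring
  have e2 : ‖(Complex.normSq z : ℂ) - 1‖ = 1 - Complex.normSq z := by
    rw [show ((Complex.normSq z : ℂ) - 1) = (((Complex.normSq z - 1 : ℝ)) : ℂ) by push_cast; ring,
      Complex.norm_real, Real.norm_eq_abs, abs_of_nonpos (by linarith)]
    ring
  have e3 : ‖(((1 - Complex.normSq w : ℝ)) : ℂ) ^ 2‖ = (1 - Complex.normSq w) ^ 2 := by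
    rw [norm_pow, Complex.norm_real, Real.norm_eq_abs]
    rw [_root_.abs_of_nonneg (by linarith : (0:ℝ) ≤ 1 - Complex.normSq w)]
  rw [e1, e2, e3] at hs
  rw [Complex.sq_norm, Complex.sq_norm]
  have hpos : 0 < 1 - Complex.normSq w := by linarith
  rw [div_mul_eq_mul_div, div_le_one (by positivity)] at hs
  nlinarith [norm_nonneg f']

lemma det_restrictScalars_complex (c : ℂ) :
    (((ContinuousLinearMap.smulRight (1 : ℂ →L[ℂ] ℂ) c).restrictScalars ℝ) :
        ℂ →L[ℝ] ℂ).det = Complex.normSq c := by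
  rw [ContinuousLinearMap.det]
  have : (((ContinuousLinearMap.smulRight (1 : ℂ →L[ℂ] ℂ) c).restrictScalars ℝ) :
      ℂ →ₗ[ℝ] ℂ) = (LinearMap.mulRight ℝ c) := by
    ext1 x
    simp [LinearMap.mulRight_apply]
  rw [this, ← LinearMap.det_toMatrix Complex.basisOneI, Matrix.det_fin_two]
  simp only [LinearMap.toMatrix_apply, Complex.coe_basisOneI_repr, Complex.coe_basisOneI,
    LinearMap.mulRight_apply, Matrix.cons_val_zero, Matrix.cons_val_one, Matrix.head_cons,
    Complex.mul_re, Complex.mul_im, Complex.I_re, Complex.I_im, Complex.one_re, Complex.one_im,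
    Complex.normSq_apply]
  ring

/-- unfolding of the Weil–Petersson pairing against a Poincaré series.
With `G`, `A`, `F`, `s > 1`, `ρ` as in the standing setup, `f` a measurable automorphic
form for `ρ` with finite `L^∞_s(𝔻,G)`-norm and `h` measurable with finite
`L¹_s(𝔻)`-norm, both integrals converge absolutely and
`⟨f, Θ_ρ[h]⟩^G_s = ∫_𝔻 f(w) conj(h(w)) λ(w)^(2-2s) d²w`
(the pairing integral being over the fundamental domain `F`;
`λ(z)^(2-2s) = (1 - |z|²)^(2s-2)`, `λ(z)^(-s) = (1 - |z|²)^s`). -/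
theorem weil_petersson_pairing_poincare_series
    {G : Type*} [Group G] [Countable G]
    (A : G → ℂ → ℂ)
    (hA_one : ∀ z ∈ UD, A 1 z = z)
    (hA_mul : ∀ g h : G, ∀ z ∈ UD, A (g * h) z = A g (A h z))
    (hA_holo : ∀ g : G, DifferentiableOn ℂ (A g) UD)
    (hA_bij : ∀ g : G, Set.BijOn (A g) UD UD)
    (hA_proper : ∀ z ∈ UD, ∃ U : Set ℂ, U ⊆ UD ∧ IsOpen U ∧ z ∈ U ∧
      {g : G | (A g '' U ∩ U).Nonempty}.Finite)
    (F : Set ℂ) (hF_sub : F ⊆ UD) (hF_meas : MeasurableSet F)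
    (hF_cover : volume (UD \ ⋃ g : G, A g '' F) = 0)
    (hF_disj : ∀ g h : G, g ≠ h → volume (A g '' F ∩ A h '' F) = 0)
    (s : ℝ) (hs : 1 < s)
    (ρ : G → ℂ → ℂ)
    (hρ_holo : ∀ g : G, DifferentiableOn ℂ (ρ g) UD)
    (hρ_ne : ∀ g : G, ∀ z ∈ UD, ρ g z ≠ 0)
    (hρ_cocycle : ∀ g h : G, ∀ z ∈ UD, ρ (g * h) z = ρ g (A h z) * ρ h z)
    (hρ_s : ∀ g : G, ∀ z ∈ UD,
      ‖ρ g z‖ = ‖deriv (A g) z‖ ^ (-s))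
    (f : ℂ → ℂ) (hf_meas : Measurable f)
    (hf_auto : ∀ g : G, ∀ z ∈ UD, f (A g z) = ρ g z * f z)
    (hf_bdd : essSup
      (fun z => ENNReal.ofReal ((1 - ‖z‖ ^ 2) ^ s * ‖f z‖))
      (volume.restrict UD) < ⊤)
    (h : ℂ → ℂ) (hh_meas : Measurable h)
    (hh_int : ∫⁻ z in UD,
      ENNReal.ofReal ((1 - ‖z‖ ^ 2) ^ (s - 2) * ‖h z‖) < ⊤)
    (Θ : ℂ → ℂ) (hΘ : Θ = fun z => ∑' g : G, h (A g z) * (ρ g z)⁻¹) :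
    IntegrableOn
      (fun z => f z * (starRingEnd ℂ) (Θ z) *
        (((1 - ‖z‖ ^ 2) ^ (2 * s - 2) : ℝ) : ℂ)) F volume ∧
    IntegrableOn
      (fun w => f w * (starRingEnd ℂ) (h w) *
        (((1 - ‖w‖ ^ 2) ^ (2 * s - 2) : ℝ) : ℂ)) UD volume ∧
    (∫ z in F, f z * (starRingEnd ℂ) (Θ z) *
        (((1 - ‖z‖ ^ 2) ^ (2 * s - 2) : ℝ) : ℂ)) =
      ∫ w in UD, f w * (starRingEnd ℂ) (h w) *
        (((1 - ‖w‖ ^ 2) ^ (2 * s - 2) : ℝ) : ℂ) := by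
  classical
  -- basic setup
  have hUD_meas : MeasurableSet UD := measurableSet_ball
  set c : ℂ → ℂ := fun z => (((1 - ‖z‖ ^ 2) ^ (2 * s - 2) : ℝ) : ℂ) with hc_def
  set φ : ℂ → ℂ := fun w => f w * (starRingEnd ℂ) (h w) * c w with hφ_def
  have hmaps : ∀ g : G, Set.MapsTo (A g) UD UD := fun g => (hA_bij g).mapsTo
  have hDa : ∀ g : G, ∀ z ∈ UD, HasDerivAt (A g) (deriv (A g) z) z := fun g z hz =>
    ((hA_holo g).differentiableAt (UD_open.mem_nhds hz)).hasDerivAt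
  -- key identity: Schwarz–Pick equality for automorphisms
  have hkey : ∀ g : G, ∀ z ∈ UD, deriv (A g) z ≠ 0 ∧
      1 - ‖A g z‖ ^ 2 = ‖deriv (A g) z‖ * (1 - ‖z‖ ^ 2) := by
    intro g z hz
    have hw : A g z ∈ UD := hmaps g hz
    have hd : HasDerivAt (A g) (deriv (A g) z) z := hDa g z hz
    have hd' : HasDerivAt (A g⁻¹) (deriv (A g⁻¹) (A g z)) (A g z) := hDa g⁻¹ _ hw
    have hinv : ∀ x ∈ UD, A g⁻¹ (A g x) = x := fun x hx => by
      rw [← hA_mul g⁻¹ g x hx, inv_mul_cancel, hA_one x hx]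
    have hcomp : HasDerivAt (A g⁻¹ ∘ A g)
        (deriv (A g⁻¹) (A g z) * deriv (A g) z) z := HasDerivAt.comp z hd' hd
    have hone : deriv (A g⁻¹) (A g z) * deriv (A g) z = 1 := by
      have hev : (id : ℂ → ℂ) =ᶠ[nhds z] (A g⁻¹ ∘ A g) :=
        Filter.eventuallyEq_of_mem (UD_open.mem_nhds hz)
          (fun x hx => (hinv x hx).symm)
      have hid : HasDerivAt (id : ℂ → ℂ)
          (deriv (A g⁻¹) (A g z) * deriv (A g) z) z :=
        hcomp.congr_of_eventuallyEq hev
      exact hid.unique (hasDerivAt_id z)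
    have habs : ‖deriv (A g⁻¹) (A g z)‖ * ‖deriv (A g) z‖ = 1 := by
      rw [← norm_mul, hone, norm_one]
    have i1 := schwarz_pick (hA_holo g) (hmaps g) hz hd
    have i2 := schwarz_pick (hA_holo g⁻¹) (hmaps g⁻¹) hw hd'
    rw [hinv z hz] at i2
    have hP := onesub_pos hz
    have hQ := onesub_pos hw
    have ha0 : (0:ℝ) ≤ ‖deriv (A g) z‖ := norm_nonneg _
    have hb0 : (0:ℝ) ≤ ‖deriv (A g⁻¹) (A g z)‖ := norm_nonneg _
    constructor
    · intro hzero
      rw [hzero, norm_zero, mul_zero] at habs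
      norm_num at habs
    · nlinarith [i1, i2, habs]
  -- measurability of φ
  have hc_cont : ContinuousOn c UD := by
    apply Continuous.comp_continuousOn Complex.continuous_ofReal
    apply ContinuousOn.rpow_const
    · exact (continuous_const.sub ((continuous_norm.pow 2))).continuousOn
    · intro z hz; left; exact (onesub_pos hz).ne'
  have hconj_meas : Measurable (starRingEnd ℂ) := Complex.continuous_conj.measurable
  have hφ_ae : AEMeasurable φ (volume.restrict UD) :=
    ((hf_meas.aemeasurable.mul ((hconj_meas.comp hh_meas).aemeasurable)).mul
      (hc_cont.aemeasurable hUD_meas))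
  -- enorm of φ on UD
  have hennφ : ∀ z ∈ UD, ((‖φ z‖₊ : ENNReal))
      = ENNReal.ofReal ((1 - ‖z‖ ^ 2) ^ s * ‖f z‖)
        * ENNReal.ofReal ((1 - ‖z‖ ^ 2) ^ (s - 2) * ‖h z‖) := by
    intro z hz
    have hp := onesub_pos hz
    have hsplit : (1 - ‖z‖ ^ 2) ^ (2 * s - 2)
        = (1 - ‖z‖ ^ 2) ^ s * (1 - ‖z‖ ^ 2) ^ (s - 2) := by
      rw [← Real.rpow_add hp]; ring_nf
    have hnorm : ‖φ z‖ = ((1 - ‖z‖ ^ 2) ^ s * ‖f z‖)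
        * ((1 - ‖z‖ ^ 2) ^ (s - 2) * ‖h z‖) := by
      simp only [hφ_def, hc_def, norm_mul, Complex.norm_conj,
        Complex.norm_real, Real.norm_eq_abs]
      rw [_root_.abs_of_nonneg (Real.rpow_nonneg hp.le _), hsplit]
      ring
    rw [← ofReal_norm_eq_coe_nnnorm, hnorm, ENNReal.ofReal_mul (by positivity)]
  -- integrability of φ on UD
  have hφ_lint : ∫⁻ z in UD, ((‖φ z‖₊ : ENNReal)) ∂volume < ⊤ := by
    set M := essSup
      (fun z => ENNReal.ofReal ((1 - ‖z‖ ^ 2) ^ s * ‖f z‖))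
      (volume.restrict UD) with hM_def
    have hae : ∀ᵐ z ∂(volume.restrict UD),
        ENNReal.ofReal ((1 - ‖z‖ ^ 2) ^ s * ‖f z‖) ≤ M :=
      ENNReal.ae_le_essSup _
    have hle : ∫⁻ z in UD, ((‖φ z‖₊ : ENNReal)) ∂volume
        ≤ ∫⁻ z in UD, M * ENNReal.ofReal
            ((1 - ‖z‖ ^ 2) ^ (s - 2) * ‖h z‖) ∂volume := by
      refine lintegral_mono_ae ?_
      filter_upwards [hae, ae_restrict_mem hUD_meas] with z h1 h2
      rw [hennφ z h2]
      exact mul_le_mul_left h1 _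
    refine lt_of_le_of_lt hle ?_
    rw [lintegral_const_mul' _ _ hf_bdd.ne]
    exact ENNReal.mul_lt_top hf_bdd hh_int
  have hφ_int : IntegrableOn φ UD volume := ⟨hφ_ae.aestronglyMeasurable, hφ_lint⟩
  -- images of the fundamental domain
  have hS_meas : ∀ g : G, MeasurableSet (A g '' F) := fun g =>
    hF_meas.image_of_continuousOn_injOn (((hA_holo g).continuousOn).mono hF_sub)
      (((hA_bij g).injOn).mono hF_sub)
  have hS_sub : ∀ g : G, A g '' F ⊆ UD := by
    rintro g w ⟨z, hzF, rfl⟩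
    exact hmaps g (hF_sub hzF)
  have hU_sub : (⋃ g : G, A g '' F) ⊆ UD := Set.iUnion_subset hS_sub
  have hUnion_ae : (⋃ g : G, A g '' F) =ᵐ[volume] UD := by
    rw [MeasureTheory.ae_eq_set]
    constructor
    · rw [Set.diff_eq_empty.mpr hU_sub]; exact measure_empty
    · exact hF_cover
  have hdisj : Pairwise (Function.onFun (MeasureTheory.AEDisjoint volume) fun g : G => A g '' F) :=
    fun g g' hgg' => hF_disj g g' hgg'
  -- fderivs
  have hfd : ∀ g : G, ∀ z ∈ F, HasFDerivWithinAt (A g)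
      (((ContinuousLinearMap.smulRight (1 : ℂ →L[ℂ] ℂ) (deriv (A g) z)).restrictScalars ℝ)) F z :=
    fun g z hz =>
      (((hDa g z (hF_sub hz)).hasFDerivAt).restrictScalars ℝ).hasFDerivWithinAt
  -- change of variables, lintegral version
  have hCoV_lint : ∀ g : G,
      ∫⁻ w in A g '' F, ((‖φ w‖₊ : ENNReal)) ∂volume
        = ∫⁻ z in F, ENNReal.ofReal (Complex.normSq (deriv (A g) z)) * ((‖φ (A g z)‖₊ : ENNReal))
            ∂volume := by
    intro g
    rw [lintegral_image_eq_lintegral_abs_det_fderiv_mul volume hF_meas (hfd g)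
      (((hA_bij g).injOn).mono hF_sub) (fun w => ((‖φ w‖₊ : ENNReal)))]
    refine setLIntegral_congr_fun hF_meas (fun z hz => ?_)
    rw [det_restrictScalars_complex, _root_.abs_of_nonneg (Complex.normSq_nonneg _)]
  -- the unfolded term
  set term : G → ℂ → ℂ := fun g z => f z * (starRingEnd ℂ) (h (A g z) * (ρ g z)⁻¹) * c z
    with hterm_def
  -- pointwise identity
  have hterm : ∀ g : G, ∀ z ∈ UD,
      term g z = ((Complex.normSq (deriv (A g) z) : ℝ) : ℂ) * φ (A g z) := by
    intro g z hz
    obtain ⟨hdne, hid⟩ := hkey g z hz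
    have hrne : ρ g z ≠ 0 := hρ_ne g z hz
    have hfz : f z = (ρ g z)⁻¹ * f (A g z) := by
      rw [hf_auto g z hz]; field_simp
    set t := ‖deriv (A g) z‖ with ht_def
    have ht : 0 < t := norm_pos_iff.mpr hdne
    have hp := onesub_pos hz
    -- real scalar identity
    have hreal : (Complex.normSq (ρ g z))⁻¹ * (1 - ‖z‖ ^ 2) ^ (2 * s - 2)
        = Complex.normSq (deriv (A g) z)
          * (1 - ‖A g z‖ ^ 2) ^ (2 * s - 2) := by
      have h1 : Complex.normSq (ρ g z) = t ^ (-s - s) := by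
        rw [← Complex.sq_norm, hρ_s g z hz, ← ht_def, ← Real.rpow_natCast (t ^ (-s)) 2,
          ← Real.rpow_mul ht.le]
        congr 1
        push_cast
        ring
      have h2 : Complex.normSq (deriv (A g) z) = t ^ (2:ℝ) := by
        rw [← Complex.sq_norm, ← ht_def,
          show ((2:ℝ)) = ((2:ℕ):ℝ) by norm_num, Real.rpow_natCast]
      rw [h1, h2, hid, Real.mul_rpow ht.le hp.le, ← Real.rpow_neg ht.le,
        ← mul_assoc, ← Real.rpow_add ht]
      congr 2
      ring
    -- complex computation
    have key2 : ((Complex.normSq (ρ g z) : ℝ) : ℂ)⁻¹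
          * (((1 - ‖z‖ ^ 2) ^ (2 * s - 2) : ℝ) : ℂ)
        = ((Complex.normSq (deriv (A g) z) : ℝ) : ℂ)
          * (((1 - ‖A g z‖ ^ 2) ^ (2 * s - 2) : ℝ) : ℂ) := by
      have := congrArg (fun r : ℝ => (r : ℂ)) hreal
      push_cast at this
      exact this
    have hprod : (ρ g z)⁻¹ * ((starRingEnd ℂ) (ρ g z))⁻¹
        = (((Complex.normSq (ρ g z) : ℝ)) : ℂ)⁻¹ := by
      rw [← mul_inv, Complex.mul_conj]
    simp only [hterm_def, hφ_def, hc_def]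
    rw [hfz, map_mul, map_inv₀]
    calc ((ρ g z)⁻¹ * f (A g z)) * ((starRingEnd ℂ) (h (A g z)) * ((starRingEnd ℂ) (ρ g z))⁻¹)
          * (((1 - ‖z‖ ^ 2) ^ (2 * s - 2) : ℝ) : ℂ)
        = (f (A g z) * (starRingEnd ℂ) (h (A g z)))
          * (((ρ g z)⁻¹ * ((starRingEnd ℂ) (ρ g z))⁻¹)
            * (((1 - ‖z‖ ^ 2) ^ (2 * s - 2) : ℝ) : ℂ)) := by ring
      _ = (f (A g z) * (starRingEnd ℂ) (h (A g z)))
          * (((Complex.normSq (ρ g z) : ℝ) : ℂ)⁻¹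
            * (((1 - ‖z‖ ^ 2) ^ (2 * s - 2) : ℝ) : ℂ)) := by rw [hprod]
      _ = (f (A g z) * (starRingEnd ℂ) (h (A g z)))
          * (((Complex.normSq (deriv (A g) z) : ℝ) : ℂ)
            * (((1 - ‖A g z‖ ^ 2) ^ (2 * s - 2) : ℝ) : ℂ)) := by rw [key2]
      _ = ((Complex.normSq (deriv (A g) z) : ℝ) : ℂ)
          * (f (A g z) * (starRingEnd ℂ) (h (A g z))
            * (((1 - ‖A g z‖ ^ 2) ^ (2 * s - 2) : ℝ) : ℂ)) := by ring
  -- enorm of term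
  have hterm_enorm : ∀ g : G, ∀ z ∈ F,
      ((‖term g z‖₊ : ENNReal))
        = ENNReal.ofReal (Complex.normSq (deriv (A g) z)) * ((‖φ (A g z)‖₊ : ENNReal)) := by
    intro g z hz
    rw [hterm g z (hF_sub hz), ← ofReal_norm_eq_coe_nnnorm, ← ofReal_norm_eq_coe_nnnorm,
      norm_mul, ENNReal.ofReal_mul (norm_nonneg _)]
    congr 1
    rw [Complex.norm_real, Real.norm_eq_abs,
      _root_.abs_of_nonneg (Complex.normSq_nonneg _)]
  -- lintegral of term over F
  have hterm_lint : ∀ g : G,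
      ∫⁻ z in F, ((‖term g z‖₊ : ENNReal)) ∂volume
        = ∫⁻ w in A g '' F, ((‖φ w‖₊ : ENNReal)) ∂volume := by
    intro g
    rw [hCoV_lint g]
    exact setLIntegral_congr_fun hF_meas
      (fun z hz => hterm_enorm g z hz)
  -- total mass
  have hsum_eq : (∑' g : G, ∫⁻ z in F, ((‖term g z‖₊ : ENNReal)) ∂volume)
      = ∫⁻ z in UD, ((‖φ z‖₊ : ENNReal)) ∂volume := by
    calc (∑' g : G, ∫⁻ z in F, ((‖term g z‖₊ : ENNReal)) ∂volume)
        = ∑' g : G, ∫⁻ w in A g '' F, ((‖φ w‖₊ : ENNReal)) ∂volume :=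
          tsum_congr fun g => hterm_lint g
      _ = ∫⁻ w in ⋃ g : G, A g '' F, ((‖φ w‖₊ : ENNReal)) ∂volume :=
          (lintegral_iUnion₀ (fun g => (hS_meas g).nullMeasurableSet) hdisj _).symm
      _ = ∫⁻ z in UD, ((‖φ z‖₊ : ENNReal)) ∂volume := setLIntegral_congr hUnion_ae
  have hsum_ne : (∑' g : G, ∫⁻ z in F, ((‖term g z‖₊ : ENNReal)) ∂volume) ≠ ⊤ := by
    rw [hsum_eq]; exact hφ_lint.ne
  -- measurability of term on F
  have hterm_meas : ∀ g : G, AEStronglyMeasurable (term g) (volume.restrict F) := by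
    intro g
    have hA_ae : AEMeasurable (A g) (volume.restrict F) :=
      ContinuousOn.aemeasurable (((hA_holo g).continuousOn).mono hF_sub) hF_meas
    have hρ_ae : AEMeasurable (ρ g) (volume.restrict F) :=
      ContinuousOn.aemeasurable (((hρ_holo g).continuousOn).mono hF_sub) hF_meas
    have hc_aeF : AEMeasurable c (volume.restrict F) :=
      (hc_cont.mono hF_sub).aemeasurable hF_meas
    refine AEMeasurable.aestronglyMeasurable ?_
    exact ((hf_meas.aemeasurable.mul
      (hconj_meas.comp_aemeasurable ((hh_meas.comp_aemeasurable hA_ae).mul hρ_ae.inv))).mul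
      hc_aeF)
  -- a.e. summability
  have hterm_ennnorm_meas : ∀ g : G,
      AEMeasurable (fun z => ((‖term g z‖₊ : ENNReal))) (volume.restrict F) := fun g =>
    (hterm_meas g).enorm
  have hae_sum : ∀ᵐ z ∂(volume.restrict F), Summable fun g : G => term g z := by
    have h1 : ∫⁻ z in F, (∑' g : G, ((‖term g z‖₊ : ENNReal))) ∂volume ≠ ⊤ := by
      rw [lintegral_tsum hterm_ennnorm_meas]
      exact hsum_ne
    filter_upwards [ae_lt_top' (AEMeasurable.ennreal_tsum hterm_ennnorm_meas) h1] with z hz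
    have h2 : Summable fun g : G => ‖term g z‖₊ :=
      ENNReal.tsum_coe_ne_top_iff_summable.mp hz.ne
    exact h2.of_nnnorm
  -- integrability of the theta pairing integrand on F
  have hT_meas : AEStronglyMeasurable (fun z => ∑' g : G, term g z) (volume.restrict F) := by
    refine aestronglyMeasurable_of_tendsto_ae (atTop : Filter (Finset G))
      (f := fun (b : Finset G) z => ∑ g ∈ b, term g z) (fun b => ?_) ?_
    · exact Finset.aestronglyMeasurable_fun_sum b fun g _ => hterm_meas g
    · filter_upwards [hae_sum] with z hz
      exact hz.hasSum
  have hT_fin : HasFiniteIntegral (fun z => ∑' g : G, term g z) (volume.restrict F) := by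
    have hb : ∀ᵐ z ∂(volume.restrict F),
        ((‖∑' g : G, term g z‖₊ : ENNReal)) ≤ ∑' g : G, ((‖term g z‖₊ : ENNReal)) := by
      filter_upwards [hae_sum] with z hz
      calc ((‖∑' g : G, term g z‖₊ : ENNReal))
          = ENNReal.ofReal ‖∑' g : G, term g z‖ := (ofReal_norm_eq_coe_nnnorm _).symm
        _ ≤ ENNReal.ofReal (∑' g : G, ‖term g z‖) :=
            ENNReal.ofReal_le_ofReal (norm_tsum_le_tsum_norm hz.norm)
        _ = ∑' g : G, ((‖term g z‖₊ : ENNReal)) := by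
            rw [ENNReal.ofReal_tsum_of_nonneg (fun g => norm_nonneg _) hz.norm]
            exact tsum_congr fun g => ofReal_norm_eq_coe_nnnorm _
    refine lt_of_le_of_lt (lintegral_mono_ae hb) ?_
    rw [lintegral_tsum hterm_ennnorm_meas]
    exact lt_of_le_of_lt (le_of_eq hsum_eq) hφ_lint
  have hT_int : Integrable (fun z => ∑' g : G, term g z) (volume.restrict F) :=
    ⟨hT_meas, hT_fin⟩
  -- the integrand of the pairing equals the tsum of terms, everywhere
  have hψ_eq : ∀ z : ℂ, f z * (starRingEnd ℂ) (Θ z) * c z = ∑' g : G, term g z := by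
    intro z
    rw [hΘ]
    have hconj : (starRingEnd ℂ) (∑' g : G, h (A g z) * (ρ g z)⁻¹)
        = ∑' g : G, (starRingEnd ℂ) (h (A g z) * (ρ g z)⁻¹) := by
      simp only [starRingEnd_apply]
      exact tsum_star
    rw [hconj, ← tsum_mul_left, ← tsum_mul_right]
  have hψ_int : IntegrableOn (fun z => f z * (starRingEnd ℂ) (Θ z) * c z) F volume :=
    hT_int.congr (Filter.Eventually.of_forall fun z => (hψ_eq z).symm)
  -- Bochner change of variables
  have hCoV_int : ∀ g : G,
      ∫ z in F, term g z ∂volume = ∫ w in A g '' F, φ w ∂volume := by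
    intro g
    rw [integral_image_eq_integral_abs_det_fderiv_smul volume hF_meas (hfd g)
      (((hA_bij g).injOn).mono hF_sub) φ]
    refine (setIntegral_congr_fun hF_meas fun z hz => ?_).symm
    rw [det_restrictScalars_complex, _root_.abs_of_nonneg (Complex.normSq_nonneg _),
      hterm g z (hF_sub hz)]
    rw [Complex.real_smul]
  -- unfolding
  have hunfold : ∫ z in F, (∑' g : G, term g z) ∂volume = ∫ w in UD, φ w ∂volume := by
    rw [integral_tsum hterm_meas hsum_ne]
    calc (∑' g : G, ∫ z in F, term g z ∂volume)
        = ∑' g : G, ∫ w in A g '' F, φ w ∂volume := tsum_congr hCoV_int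
      _ = ∫ w in ⋃ g : G, A g '' F, φ w ∂volume :=
          (integral_iUnion_ae (fun g => (hS_meas g).nullMeasurableSet) hdisj
            (hφ_int.mono_set hU_sub)).symm
      _ = ∫ w in UD, φ w ∂volume := setIntegral_congr_set hUnion_ae
  refine ⟨hψ_int, hφ_int, ?_⟩
  calc ∫ z in F, f z * (starRingEnd ℂ) (Θ z) * c z ∂volume
      = ∫ z in F, (∑' g : G, term g z) ∂volume :=
        integral_congr_ae (Filter.Eventually.of_forall fun z => hψ_eq z)
    _ = ∫ w in UD, φ w ∂volume := hunfold
end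

section
/- Let D ⊆ ℂ be a nonempty open connected set and let f, h : D → ℂ be holomorphic with nowhere-vanishing derivatives. If S_f = S_h on D, then there exist a, b, c, d ∈ ℂ with a·d − b·c = 1 such that c·f(z) + d ≠ 0 and h(z) = (a·f(z) + b)/(c·f(z) + d) for all z ∈ D; that is, any two locally injective solutions of the Schwarzian equation S = φ differ by post-composition with a Möbius transformation. -/
/-- The Schwarzian derivative `S_f = (f''/f')' - (1/2)(f''/f')²`. -/
noncomputable def schwarzian (f : ℂ → ℂ) (z : ℂ) : ℂ :=
  deriv (fun w => deriv (deriv f) w / deriv f w) z -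
    (1 / 2) * (deriv (deriv f) z / deriv f z) ^ 2

private lemma const_on_of_hasDerivAt_zero' {s : Set ℂ} (hs : Convex ℝ s) {F : ℂ → ℂ}
    (hF : ∀ x ∈ s, HasDerivAt F 0 x) {x y : ℂ} (hx : x ∈ s) (hy : y ∈ s) : F x = F y := by
  have key : ∀ z ∈ s, HasFDerivWithinAt F (0 : ℂ →L[ℂ] ℂ) s z := by
    intro z hz
    have h2 : HasFDerivWithinAt F (ContinuousLinearMap.smulRight (1 : ℂ →L[ℂ] ℂ) 0) s z :=
      (hF z hz).hasFDerivAt.hasFDerivWithinAt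
    convert h2 using 1
    ext w
    simp
  have h3 := hs.norm_image_sub_le_of_norm_hasFDerivWithin_le key (C := 0)
    (fun z hz => by simp) hx hy
  have h4 : ‖F y - F x‖ ≤ 0 := by simpa using h3
  exact (sub_eq_zero.mp (norm_le_zero_iff.mp h4)).symm

private lemma schwarzian_formula' {D : Set ℂ} (hD : IsOpen D) {f : ℂ → ℂ}
    (hf : DifferentiableOn ℂ f D) {z : ℂ} (hz : z ∈ D) (hf1 : deriv f z ≠ 0) :
    schwarzian f z =
      (deriv (deriv (deriv f)) z * deriv f z - (deriv (deriv f) z)^2) / (deriv f z)^2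
        - (1/2) * (deriv (deriv f) z / deriv f z)^2 := by
  have hfa : AnalyticOnNhd ℂ f D := hf.analyticOnNhd hD
  have h1a := hfa.deriv
  have h2a := h1a.deriv
  have H1 : HasDerivAt (deriv f) (deriv (deriv f) z) z :=
    (h1a z hz).differentiableAt.hasDerivAt
  have H2 : HasDerivAt (deriv (deriv f)) (deriv (deriv (deriv f)) z) z :=
    (h2a z hz).differentiableAt.hasDerivAt
  have HP : HasDerivAt (fun w => deriv (deriv f) w / deriv f w)
      ((deriv (deriv (deriv f)) z * deriv f z - deriv (deriv f) z * deriv (deriv f) z)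
        / deriv f z ^ 2) z := H2.div H1 hf1
  rw [schwarzian, HP.deriv]
  ring

set_option maxHeartbeats 2000000 in
/-- two locally injective holomorphic functions on a nonempty open
connected set `D ⊆ ℂ` with the same Schwarzian derivative differ by post-composition
with a Möbius transformation (normalized to determinant one). -/
theorem schwarzian_solutions_mobius_equivalent
    (D : Set ℂ) (hD : IsOpen D) (hne : D.Nonempty) (hconn : IsPreconnected D)
    (f h : ℂ → ℂ)
    (hf : DifferentiableOn ℂ f D) (hf' : ∀ z ∈ D, deriv f z ≠ 0)
    (hh : DifferentiableOn ℂ h D) (hh' : ∀ z ∈ D, deriv h z ≠ 0)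
    (heq : ∀ z ∈ D, schwarzian f z = schwarzian h z) :
    ∃ a b c d : ℂ, a * d - b * c = 1 ∧
      ∀ z ∈ D, c * f z + d ≠ 0 ∧ h z = (a * f z + b) / (c * f z + d) := by
  obtain ⟨z₀, hz₀⟩ := hne
  have hfa : AnalyticOnNhd ℂ f D := hf.analyticOnNhd hD
  have hha : AnalyticOnNhd ℂ h D := hh.analyticOnNhd hD
  have hf1a : AnalyticOnNhd ℂ (deriv f) D := hfa.deriv
  have hf2a : AnalyticOnNhd ℂ (deriv (deriv f)) D := hf1a.deriv
  have hh1a : AnalyticOnNhd ℂ (deriv h) D := hha.deriv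
  have hh2a : AnalyticOnNhd ℂ (deriv (deriv h)) D := hh1a.deriv
  have Hf : ∀ z ∈ D, HasDerivAt f (deriv f z) z := fun z hz =>
    (hf.differentiableAt (hD.mem_nhds hz)).hasDerivAt
  have Hf1 : ∀ z ∈ D, HasDerivAt (deriv f) (deriv (deriv f) z) z := fun z hz =>
    (hf1a z hz).differentiableAt.hasDerivAt
  have Hf2 : ∀ z ∈ D, HasDerivAt (deriv (deriv f)) (deriv (deriv (deriv f)) z) z := fun z hz =>
    (hf2a z hz).differentiableAt.hasDerivAt
  have Hh : ∀ z ∈ D, HasDerivAt h (deriv h z) z := fun z hz =>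
    (hh.differentiableAt (hD.mem_nhds hz)).hasDerivAt
  have Hh1 : ∀ z ∈ D, HasDerivAt (deriv h) (deriv (deriv h) z) z := fun z hz =>
    (hh1a z hz).differentiableAt.hasDerivAt
  have hF1 : deriv f z₀ ≠ 0 := hf' z₀ hz₀
  have hH1 : deriv h z₀ ≠ 0 := hh' z₀ hz₀
  -- choose the Möbius coefficients
  obtain ⟨t, ht2⟩ : ∃ t : ℂ, t ^ 2 = deriv f z₀ / deriv h z₀ :=
    IsAlgClosed.exists_pow_nat_eq _ two_pos
  have ht : t ≠ 0 := by
    intro h0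
    rw [h0, pow_two, zero_mul] at ht2
    exact div_ne_zero hF1 hH1 ht2.symm
  set c : ℂ := (deriv (deriv f) z₀ / deriv f z₀ - deriv (deriv h) z₀ / deriv h z₀) * t
      / (2 * deriv f z₀) with hc
  set d : ℂ := t - c * f z₀ with hd
  set a : ℂ := (1 + c * h z₀ * t) / t with ha
  set b : ℂ := h z₀ * t - a * f z₀ with hb
  clear_value c d a b
  have hat : a * t = 1 + c * h z₀ * t := by rw [ha]; field_simp
  have hdet : a * d - b * c = 1 := by rw [hb, hd]; linear_combination hat
  have htz0 : c * f z₀ + d = t := by rw [hd]; ring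
  -- a ball around z₀ on which c*f+d does not vanish
  have hVopen : IsOpen (D ∩ (fun z => c * f z + d) ⁻¹' {(0 : ℂ)}ᶜ) :=
    ContinuousOn.isOpen_inter_preimage
      ((continuousOn_const.mul hf.continuousOn).add continuousOn_const) hD isOpen_compl_singleton
  have hz₀V : z₀ ∈ D ∩ (fun z => c * f z + d) ⁻¹' {(0 : ℂ)}ᶜ := by
    refine ⟨hz₀, ?_⟩
    simp only [Set.mem_preimage, Set.mem_compl_iff, Set.mem_singleton_iff, htz0]
    exact ht
  obtain ⟨ε, hε, hball⟩ := Metric.isOpen_iff.mp hVopen z₀ hz₀V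
  set U : Set ℂ := Metric.ball z₀ ε with hU
  have hUopen : IsOpen U := Metric.isOpen_ball
  have hUconv : Convex ℝ U := convex_ball z₀ ε
  have hz₀U : z₀ ∈ U := Metric.mem_ball_self hε
  have hUD : ∀ z ∈ U, z ∈ D := fun z hz => (hball hz).1
  have hcfd : ∀ z ∈ U, c * f z + d ≠ 0 := fun z hz => by
    have := (hball hz).2
    simpa using this
  -- first derivative of the Möbius image of f
  have key1 : ∀ z : ℂ, a * deriv f z * (c * f z + d) - (a * f z + b) * (c * deriv f z)
      = deriv f z := fun z => by linear_combination deriv f z * hdet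
  have Hg : ∀ z ∈ U, HasDerivAt (fun w => (a * f w + b) / (c * f w + d))
      (deriv f z / (c * f z + d) ^ 2) z := by
    intro z hz
    have hz' := hUD z hz
    have H := (((Hf z hz').const_mul a).add_const b).div
      (((Hf z hz').const_mul c).add_const d) (hcfd z hz)
    rw [key1 z] at H
    exact H
  -- the logarithmic derivative of the derivative of the Möbius image of f
  have HQ : ∀ z ∈ U, HasDerivAt
      (fun w => deriv (deriv f) w / deriv f w - 2 * c * deriv f w / (c * f w + d))
      ((deriv (deriv (deriv f)) z * deriv f z - deriv (deriv f) z * deriv (deriv f) z)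
          / deriv f z ^ 2
        - (2 * c * deriv (deriv f) z * (c * f z + d) - 2 * c * deriv f z * (c * deriv f z))
          / (c * f z + d) ^ 2) z := by
    intro z hz
    have hz' := hUD z hz
    exact ((Hf2 z hz').div (Hf1 z hz') (hf' z hz')).sub
      (((Hf1 z hz').const_mul (2 * c)).div (((Hf z hz').const_mul c).add_const d) (hcfd z hz))
  have hQval : ∀ z ∈ U,
      deriv (fun w => deriv (deriv f) w / deriv f w - 2 * c * deriv f w / (c * f w + d)) z
      = schwarzian f z
        + (1/2) * (deriv (deriv f) z / deriv f z - 2 * c * deriv f z / (c * f z + d)) ^ 2 := by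
    intro z hz
    have hz' := hUD z hz
    have h1 : deriv f z ≠ 0 := hf' z hz'
    have h2 : c * f z + d ≠ 0 := hcfd z hz
    rw [(HQ z hz).deriv, schwarzian_formula' hD hf hz' h1]
    set F1 := deriv f z with hF1d
    set F2 := deriv (deriv f) z with hF2d
    set F3 := deriv (deriv (deriv f)) z with hF3d
    set M := c * f z + d with hMd
    clear_value F1 F2 F3 M
    field_simp [h1, h2]
    ring
  have hslh : ∀ z : ℂ,
      deriv (fun w => deriv (deriv h) w / deriv h w) z
      = schwarzian h z + (1/2) * (deriv (deriv h) z / deriv h z) ^ 2 := fun z => by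
    simp only [schwarzian]; ring
  have key2 : ∀ z ∈ U,
      deriv (fun w => deriv (deriv h) w / deriv h w) z
      = ((deriv (deriv (deriv f)) z * deriv f z - deriv (deriv f) z * deriv (deriv f) z)
            / deriv f z ^ 2
          - (2 * c * deriv (deriv f) z * (c * f z + d) - 2 * c * deriv f z * (c * deriv f z))
            / (c * f z + d) ^ 2)
        + (1/2) * (deriv (deriv h) z / deriv h z) ^ 2
        - (1/2) * (deriv (deriv f) z / deriv f z - 2 * c * deriv f z / (c * f z + d)) ^ 2 := by
    intro z hz
    have hz' := hUD z hz
    have e1 := hslh z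
    have e2 := heq z hz'
    have e3 := hQval z hz
    have e4 := (HQ z hz).deriv
    linear_combination e1 + e4 - e3 - e2
  -- the quantity (P_h - Q)^2 / (g' h') has vanishing derivative on U
  have HW : ∀ z ∈ U, HasDerivAt (fun w =>
      (deriv (deriv h) w / deriv h w
        - (deriv (deriv f) w / deriv f w - 2 * c * deriv f w / (c * f w + d))) ^ 2
      / ((deriv f w / (c * f w + d) ^ 2) * deriv h w)) 0 z := by
    intro z hz
    have hz' := hUD z hz
    have h1 : deriv f z ≠ 0 := hf' z hz'
    have h2 : c * f z + d ≠ 0 := hcfd z hz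
    have h3 : deriv h z ≠ 0 := hh' z hz'
    have HPh : HasDerivAt (fun w => deriv (deriv h) w / deriv h w)
        (deriv (fun w => deriv (deriv h) w / deriv h w) z) z :=
      (((hh2a z hz').differentiableAt).div ((hh1a z hz').differentiableAt) h3).hasDerivAt
    have Hg1 := (Hf1 z hz').div ((((Hf z hz').const_mul c).add_const d).pow 2)
      (pow_ne_zero 2 (hcfd z hz))
    have Hnum := (HPh.sub (HQ z hz)).pow 2
    have Hden := Hg1.mul (Hh1 z hz')
    have hdne : (deriv f z / (c * f z + d) ^ 2) * deriv h z ≠ 0 :=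
      mul_ne_zero (div_ne_zero h1 (pow_ne_zero _ h2)) h3
    have H := Hnum.div Hden hdne
    refine H.congr_deriv (Eq.symm ?_)
    simp only [Pi.div_apply, Pi.pow_apply, Pi.mul_apply, Pi.sub_apply, -Nat.reduceSub]
    have k2 := key2 z hz
    rw [eq_comm, div_eq_zero_iff]
    left
    set p := deriv (deriv h) z / deriv h z with hp
    set q := deriv (deriv f) z / deriv f z - 2 * c * deriv f z / (c * f z + d) with hq
    set DQ0 := (deriv (deriv (deriv f)) z * deriv f z - deriv (deriv f) z * deriv (deriv f) z)
        / deriv f z ^ 2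
      - (2 * c * deriv (deriv f) z * (c * f z + d) - 2 * c * deriv f z * (c * deriv f z))
        / (c * f z + d) ^ 2 with hDQ0
    set g1v := deriv f z / (c * f z + d) ^ 2 with hg1v
    have hDg1 : (deriv (deriv f) z * (c * f z + d) ^ 2
        - deriv f z * ((2 : ℕ) * (c * f z + d) ^ (2 - 1) * (c * deriv f z))) / ((c * f z + d) ^ 2) ^ 2
        = g1v * q := by
      rw [hg1v, hq]
      field_simp [h1, h2]
      ring
    have hK2 : deriv (deriv h) z = p * deriv h z := by
      rw [hp]
      exact (div_mul_cancel₀ _ h3).symm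
    rw [k2, hDg1, hK2]
    push_cast
    ring
  -- matching at z₀
  have hPQ0 : deriv (deriv h) z₀ / deriv h z₀
      - (deriv (deriv f) z₀ / deriv f z₀ - 2 * c * deriv f z₀ / (c * f z₀ + d)) = 0 := by
    rw [htz0, hc]
    have e : 2 * ((deriv (deriv f) z₀ / deriv f z₀ - deriv (deriv h) z₀ / deriv h z₀) * t
          / (2 * deriv f z₀)) * deriv f z₀ / t
        = deriv (deriv f) z₀ / deriv f z₀ - deriv (deriv h) z₀ / deriv h z₀ := by
      set u := deriv (deriv f) z₀ / deriv f z₀ - deriv (deriv h) z₀ / deriv h z₀ with hu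
      clear_value u
      field_simp
    rw [e]
    ring
  have hW0 : (deriv (deriv h) z₀ / deriv h z₀
        - (deriv (deriv f) z₀ / deriv f z₀ - 2 * c * deriv f z₀ / (c * f z₀ + d))) ^ 2
      / ((deriv f z₀ / (c * f z₀ + d) ^ 2) * deriv h z₀) = 0 := by
    rw [hPQ0]
    simp
  have hPQ : ∀ z ∈ U, deriv (deriv h) z / deriv h z
      = deriv (deriv f) z / deriv f z - 2 * c * deriv f z / (c * f z + d) := by
    intro z hz
    have hz' := hUD z hz
    have h1 : deriv f z ≠ 0 := hf' z hz'
    have h2 : c * f z + d ≠ 0 := hcfd z hz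
    have h3 : deriv h z ≠ 0 := hh' z hz'
    have hW := const_on_of_hasDerivAt_zero' hUconv HW hz hz₀U
    have h6 : (deriv (deriv h) z / deriv h z
        - (deriv (deriv f) z / deriv f z - 2 * c * deriv f z / (c * f z + d))) ^ 2
      / ((deriv f z / (c * f z + d) ^ 2) * deriv h z) = 0 := hW.trans hW0
    have hdne : (deriv f z / (c * f z + d) ^ 2) * deriv h z ≠ 0 :=
      mul_ne_zero (div_ne_zero h1 (pow_ne_zero _ h2)) h3
    rcases div_eq_zero_iff.mp h6 with h7 | h7
    · exact sub_eq_zero.mp ((pow_eq_zero_iff two_ne_zero).mp h7)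
    · exact absurd h7 hdne
  -- h' / g' has vanishing derivative on U
  have HV : ∀ z ∈ U, HasDerivAt (fun w => deriv h w / (deriv f w / (c * f w + d) ^ 2)) 0 z := by
    intro z hz
    have hz' := hUD z hz
    have h1 : deriv f z ≠ 0 := hf' z hz'
    have h2 : c * f z + d ≠ 0 := hcfd z hz
    have h3 : deriv h z ≠ 0 := hh' z hz'
    have Hg1 := (Hf1 z hz').div ((((Hf z hz').const_mul c).add_const d).pow 2)
      (pow_ne_zero 2 (hcfd z hz))
    have H := (Hh1 z hz').div Hg1 (div_ne_zero h1 (pow_ne_zero _ h2))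
    refine H.congr_deriv (Eq.symm ?_)
    simp only [Pi.div_apply, Pi.pow_apply, Pi.mul_apply, Pi.sub_apply, -Nat.reduceSub]
    have e : deriv (deriv h) z
        = (deriv (deriv f) z / deriv f z - 2 * c * deriv f z / (c * f z + d)) * deriv h z := by
      rw [← hPQ z hz]
      field_simp
    rw [e]
    set F1 := deriv f z with e1
    set F2 := deriv (deriv f) z with e2
    set K1 := deriv h z with e3
    set M := c * f z + d with e4
    clear_value F1 F2 K1 M
    field_simp [h1, h2, h3]
    ring
  have hg1eq : ∀ z ∈ U, deriv h z = deriv f z / (c * f z + d) ^ 2 := by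
    intro z hz
    have h1 : deriv f z ≠ 0 := hf' z (hUD z hz)
    have h2 : c * f z + d ≠ 0 := hcfd z hz
    have hV := const_on_of_hasDerivAt_zero' hUconv HV hz hz₀U
    have hV0 : deriv h z₀ / (deriv f z₀ / (c * f z₀ + d) ^ 2) = 1 := by
      rw [htz0, ht2]
      field_simp
    have h5 : deriv h z / (deriv f z / (c * f z + d) ^ 2) = 1 := hV.trans hV0
    exact (div_eq_one_iff_eq (div_ne_zero h1 (pow_ne_zero _ h2))).mp h5
  -- h - g has vanishing derivative on U
  have HK : ∀ z ∈ U, HasDerivAt (fun w => h w - (a * f w + b) / (c * f w + d)) 0 z := by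
    intro z hz
    have hz' := hUD z hz
    have H := (Hh z hz').sub (Hg z hz)
    refine H.congr_deriv (Eq.symm ?_)
    rw [hg1eq z hz]
    ring
  have hhg : ∀ z ∈ U, h z = (a * f z + b) / (c * f z + d) := by
    intro z hz
    have hK := const_on_of_hasDerivAt_zero' hUconv HK hz hz₀U
    have hK0 : h z₀ - (a * f z₀ + b) / (c * f z₀ + d) = 0 := by
      rw [htz0, hb]
      field_simp
      ring
    have h5 : h z - (a * f z + b) / (c * f z + d) = 0 := hK.trans hK0
    exact sub_eq_zero.mp h5
  -- globalize by the identity theorem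
  have hGd : DifferentiableOn ℂ (fun w => h w * (c * f w + d) - (a * f w + b)) D :=
    (hh.mul ((hf.const_mul c).add_const d)).sub ((hf.const_mul a).add_const b)
  have hGa : AnalyticOnNhd ℂ (fun w => h w * (c * f w + d) - (a * f w + b)) D :=
    hGd.analyticOnNhd hD
  have hGU : Set.EqOn (fun w => h w * (c * f w + d) - (a * f w + b)) 0 U := by
    intro z hz
    have h2 : c * f z + d ≠ 0 := hcfd z hz
    show h z * (c * f z + d) - (a * f z + b) = 0
    rw [hhg z hz]
    field_simp
    have h2' : f z * c + d ≠ 0 := by rwa [mul_comm]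
    simp [h2']
  have hGev : (fun w => h w * (c * f w + d) - (a * f w + b)) =ᶠ[nhds z₀] 0 :=
    Filter.eventuallyEq_of_mem (hUopen.mem_nhds hz₀U) hGU
  have hG0 : Set.EqOn (fun w => h w * (c * f w + d) - (a * f w + b)) 0 D :=
    hGa.eqOn_zero_of_preconnected_of_eventuallyEq_zero hconn hz₀ hGev
  refine ⟨a, b, c, d, hdet, fun z hz => ?_⟩
  have hz1 : h z * (c * f z + d) - (a * f z + b) = 0 := hG0 hz
  have hne2 : c * f z + d ≠ 0 := by
    intro h0
    have hab : a * f z + b = 0 := by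
      rw [h0] at hz1
      linear_combination -hz1
    have hcontra : (1 : ℂ) = 0 := by
      linear_combination (-1 : ℂ) * hdet - c * hab + a * h0
    exact one_ne_zero hcontra
  refine ⟨hne2, ?_⟩
  rw [eq_div_iff hne2]
  linear_combination hz1
end

section
/- Let G be a group (under composition) of Möbius transformations, each of which maps the unit disc 𝔻 onto itself, and let f : 𝔻 → ℂ be holomorphic with nowhere-vanishing derivative. Then the following are equivalent: (i) S_f(z) = S_f(g(z))·g′(z)² for every g ∈ G and z ∈ 𝔻 (i.e. S_f is a quadratic differential for G); (ii) for every g ∈ G there exist a, b, c, d ∈ ℂ with a·d − b·c = 1 such that c·f(z) + d ≠ 0 and f(g(z)) = (a·f(z) + b)/(c·f(z) + d) for all z ∈ 𝔻. Moreover, in case (ii) the Möbius transformation M_g with f∘g = M_g∘f is uniquely determined by g, and the assignment g ↦ M_g is a group homomorphism of G into the group of Möbius transformations. -/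
open Filter Metric Set
open scoped Topology

lemma mobius_hasDerivAt (a b c d z : ℂ) (h : c*z+d ≠ 0) :
    HasDerivAt (fun w => (a*w+b)/(c*w+d)) ((a*d-b*c)/(c*z+d)^2) z := by
  have h1 : HasDerivAt (fun w : ℂ => a*w+b) a z := by
    simpa using ((hasDerivAt_id z).const_mul a).add_const b
  have h2 : HasDerivAt (fun w : ℂ => c*w+d) c z := by
    simpa using ((hasDerivAt_id z).const_mul c).add_const d
  have := h1.fun_div h2 h
  refine this.congr_deriv ?_
  ring

lemma analyticAt_deriv {g : ℂ → ℂ} {z : ℂ} (hg : AnalyticAt ℂ g z) :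
    AnalyticAt ℂ (deriv g) z :=
  (AnalyticOnNhd.deriv (fun _ hy => hy : AnalyticOnNhd ℂ g {y | AnalyticAt ℂ g y})) z hg

lemma schwarzian_congr {f g : ℂ → ℂ} {z : ℂ} (h : f =ᶠ[𝓝 z] g) :
    schwarzian f z = schwarzian g z := by
  have h1 : deriv f =ᶠ[𝓝 z] deriv g := h.deriv
  have h2 : deriv (deriv f) =ᶠ[𝓝 z] deriv (deriv g) := h1.deriv
  unfold schwarzian
  rw [h1.self_of_nhds, h2.self_of_nhds, Filter.EventuallyEq.deriv_eq
    (by filter_upwards [h1, h2] with w e1 e2; rw [e1, e2])]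

/-- eventual nonvanishing and derivative formula for Möbius maps -/
lemma mobius_eventually (a b c d z : ℂ) (h : c*z+d ≠ 0) :
    ∀ᶠ w in 𝓝 z, c*w+d ≠ 0 ∧
      deriv (fun w => (a*w+b)/(c*w+d)) w = (a*d-b*c)/(c*w+d)^2 := by
  have hcont : ContinuousAt (fun w : ℂ => c*w+d) z := by fun_prop
  filter_upwards [hcont.eventually_ne h] with w hw
  exact ⟨hw, (mobius_hasDerivAt a b c d w hw).deriv⟩

lemma schwarzian_mobius (a b c d z : ℂ) (hdet : a*d-b*c ≠ 0) (h : c*z+d ≠ 0) :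
    schwarzian (fun w => (a*w+b)/(c*w+d)) z = 0 := by
  set m : ℂ → ℂ := fun w => (a*w+b)/(c*w+d) with hm
  have hev := mobius_eventually a b c d z h
  have hd1 : deriv m =ᶠ[𝓝 z] fun w => (a*d-b*c)/(c*w+d)^2 :=
    hev.mono fun w hw => hw.2
  -- second derivative
  have hd2 : deriv (deriv m) =ᶠ[𝓝 z] fun w => (-2*c*(a*d-b*c))/(c*w+d)^3 := by
    filter_upwards [hd1.eventually_nhds, hev] with w hw hw2
    obtain ⟨hne, -⟩ := hw2
    rw [Filter.EventuallyEq.deriv_eq hw]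
    have hden : HasDerivAt (fun w : ℂ => (c*w+d)^2) (2*(c*w+d)*c) w := by
      have h2 : HasDerivAt (fun w : ℂ => c*w+d) c w := by
        simpa using ((hasDerivAt_id w).const_mul c).add_const d
      simpa using h2.fun_pow 2
    have := (hasDerivAt_const w (a*d-b*c)).fun_div hden (pow_ne_zero 2 hne)
    rw [this.deriv]
    field_simp
    ring
  have hratio : (fun w => deriv (deriv m) w / deriv m w) =ᶠ[𝓝 z]
      fun w => -2*c/(c*w+d) := by
    filter_upwards [hd1, hd2, hev] with w h1 h2 hw
    obtain ⟨hne, -⟩ := hw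
    rw [h1, h2]
    generalize a*d-b*c = k at hdet ⊢
    field_simp
  unfold schwarzian
  rw [Filter.EventuallyEq.deriv_eq hratio, hd1.self_of_nhds, hd2.self_of_nhds]
  have hder : HasDerivAt (fun w : ℂ => -2*c/(c*w+d)) (2*c^2/(c*z+d)^2) z := by
    have h2 : HasDerivAt (fun w : ℂ => c*w+d) c z := by
      simpa using ((hasDerivAt_id z).const_mul c).add_const d
    have := (hasDerivAt_const z (-2*c)).fun_div h2 h
    refine this.congr_deriv ?_
    ring
  rw [hder.deriv]
  generalize a*d-b*c = k at hdet ⊢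
  field_simp
  ring

lemma schwarzian_comp {f g : ℂ → ℂ} {z : ℂ}
    (hf : AnalyticAt ℂ f (g z)) (hg : AnalyticAt ℂ g z)
    (hf' : deriv f (g z) ≠ 0) (hg' : deriv g z ≠ 0) :
    schwarzian (f ∘ g) z = schwarzian f (g z) * (deriv g z)^2 + schwarzian g z := by
  -- eventual facts near z
  have hgc : ContinuousAt g z := hg.continuousAt
  have hfa : ∀ᶠ w in 𝓝 z, AnalyticAt ℂ f (g w) := hgc.eventually hf.eventually_analyticAt
  have hga : ∀ᶠ w in 𝓝 z, AnalyticAt ℂ g w := hg.eventually_analyticAt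
  have hfne : ∀ᶠ w in 𝓝 z, deriv f (g w) ≠ 0 :=
    hgc.eventually ((analyticAt_deriv hf).continuousAt.eventually_ne hf')
  have hgne : ∀ᶠ w in 𝓝 z, deriv g w ≠ 0 :=
    (analyticAt_deriv hg).continuousAt.eventually_ne hg'
  -- first derivative of composition
  have E2 : deriv (f ∘ g) =ᶠ[𝓝 z] fun w => deriv f (g w) * deriv g w := by
    filter_upwards [hfa, hga] with w h1 h2
    exact (HasDerivAt.comp w h1.differentiableAt.hasDerivAt
      h2.differentiableAt.hasDerivAt).deriv
  -- second derivative
  have E3 : deriv (deriv (f ∘ g)) =ᶠ[𝓝 z]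
      fun w => deriv (deriv f) (g w) * (deriv g w)^2 + deriv f (g w) * deriv (deriv g) w := by
    filter_upwards [E2.eventually_nhds, hfa, hga] with w hw h1 h2
    rw [Filter.EventuallyEq.deriv_eq hw]
    have d1 : HasDerivAt (fun v => deriv f (g v)) (deriv (deriv f) (g w) * deriv g w) w :=
      HasDerivAt.comp w (analyticAt_deriv h1).differentiableAt.hasDerivAt
        h2.differentiableAt.hasDerivAt
    have d2 : HasDerivAt (deriv g) (deriv (deriv g) w) w :=
      (analyticAt_deriv h2).differentiableAt.hasDerivAt
    have := d1.fun_mul d2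
    rw [this.deriv]
    ring
  -- ratio
  have E4 : (fun w => deriv (deriv (f ∘ g)) w / deriv (f ∘ g) w) =ᶠ[𝓝 z]
      fun w => (deriv (deriv f) (g w) / deriv f (g w)) * deriv g w
        + deriv (deriv g) w / deriv g w := by
    filter_upwards [E2, E3, hfne, hgne] with w e2 e3 hne1 hne2
    rw [e2, e3]
    field_simp
  have hPfa : AnalyticAt ℂ (fun y => deriv (deriv f) y / deriv f y) (g z) :=
    (analyticAt_deriv (analyticAt_deriv hf)).div (analyticAt_deriv hf) hf'
  have hPga : AnalyticAt ℂ (fun y => deriv (deriv g) y / deriv g y) z :=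
    (analyticAt_deriv (analyticAt_deriv hg)).div (analyticAt_deriv hg) hg'
  have d1 : HasDerivAt (fun w => (deriv (deriv f) (g w) / deriv f (g w)) * deriv g w
        + deriv (deriv g) w / deriv g w)
      (deriv (fun y => deriv (deriv f) y / deriv f y) (g z) * deriv g z * deriv g z
        + (deriv (deriv f) (g z) / deriv f (g z)) * deriv (deriv g) z
        + deriv (fun y => deriv (deriv g) y / deriv g y) z) z := by
    have c1 : HasDerivAt (fun w => deriv (deriv f) (g w) / deriv f (g w))
        (deriv (fun y => deriv (deriv f) y / deriv f y) (g z) * deriv g z) z :=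
      HasDerivAt.comp z hPfa.differentiableAt.hasDerivAt hg.differentiableAt.hasDerivAt
    have c2 : HasDerivAt (deriv g) (deriv (deriv g) z) z :=
      (analyticAt_deriv hg).differentiableAt.hasDerivAt
    have c3 : HasDerivAt (fun w => deriv (deriv g) w / deriv g w)
        (deriv (fun y => deriv (deriv g) y / deriv g y) z) z :=
      hPga.differentiableAt.hasDerivAt
    exact (c1.mul c2).add c3
  unfold schwarzian
  rw [Filter.EventuallyEq.deriv_eq E4, E2.self_of_nhds, E3.self_of_nhds, d1.deriv]
  simp only
  field_simp
  ring

/-- If an analytic function satisfies `u' = A·u` near `z₀` with `u z₀ = 0`, it vanishes near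
`z₀`. -/
lemma eventually_zero_of_deriv_eq {u A : ℂ → ℂ} {z₀ : ℂ} (hu : AnalyticAt ℂ u z₀)
    (hA : AnalyticAt ℂ A z₀) (h0 : u z₀ = 0)
    (hder : ∀ᶠ w in 𝓝 z₀, deriv u w = A w * u w) : ∀ᶠ w in 𝓝 z₀, u w = 0 := by
  by_contra hne
  have horder : analyticOrderAt u z₀ ≠ ⊤ := fun h => hne (analyticOrderAt_eq_top.mp h)
  obtain ⟨n, hn⟩ : ∃ n : ℕ, analyticOrderAt u z₀ = n := by
    lift analyticOrderAt u z₀ to ℕ using horder with n hn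
    exact ⟨n, rfl⟩
  obtain ⟨v, hv, hv0, huv⟩ := (hu.analyticOrderAt_eq_natCast).mp hn
  -- n ≥ 1
  obtain ⟨m, rfl⟩ : ∃ m, n = m + 1 := by
    rcases Nat.eq_zero_or_pos n with h | h
    · exfalso
      apply hv0
      have := huv.self_of_nhds
      rw [h] at this
      simpa [h0.symm] using this.symm
    · exact ⟨n - 1, (Nat.succ_pred_eq_of_pos h).symm⟩
  -- eventual identity
  have key : ∀ᶠ w in 𝓝[≠] z₀, ((m:ℂ)+1) * v w + (w - z₀) * deriv v w
      = A w * ((w - z₀) * v w) := by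
    have hvd : ∀ᶠ w in 𝓝 z₀, AnalyticAt ℂ v w := hv.eventually_analyticAt
    have huv' : u =ᶠ[𝓝 z₀] (fun z => (z - z₀)^(m+1) • v z) := huv
    have hDu : deriv u =ᶠ[𝓝 z₀] deriv (fun z => (z - z₀)^(m+1) • v z) := huv'.deriv
    have main : ∀ᶠ w in 𝓝 z₀, (w - z₀)^m * (((m:ℂ)+1) * v w + (w - z₀) * deriv v w)
        = (w - z₀)^m * (A w * ((w - z₀) * v w)) := by
      filter_upwards [hDu, hder, huv, hvd] with w e1 e2 e3 e4
      have hpow : HasDerivAt (fun z : ℂ => (z - z₀)^(m+1))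
          (((m:ℂ)+1) * (w - z₀)^m) w := by
        have : HasDerivAt (fun z : ℂ => z - z₀) 1 w := (hasDerivAt_id w).sub_const z₀
        simpa using this.fun_pow (m+1)
      have hprod := hpow.fun_mul e4.differentiableAt.hasDerivAt
      have e5 : deriv (fun z => (z - z₀)^(m+1) • v z) w
          = ((m:ℂ)+1) * (w - z₀)^m * v w + (w - z₀)^(m+1) * deriv v w := by
        simpa [smul_eq_mul] using hprod.deriv
      have := e2.symm.trans (e1.trans e5)
      -- A w * u w = ..., u w = (w-z₀)^(m+1) v w
      rw [e3, smul_eq_mul] at this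
      linear_combination -this
    rw [eventually_nhdsWithin_iff]
    filter_upwards [main] with w hw hw'
    have hwz : w - z₀ ≠ 0 := sub_ne_zero.mpr hw'
    exact mul_left_cancel₀ (pow_ne_zero m hwz) hw
  -- take limits
  have hL : Tendsto (fun w => ((m:ℂ)+1) * v w + (w - z₀) * deriv v w) (𝓝[≠] z₀)
      (𝓝 (((m:ℂ)+1) * v z₀)) := by
    have : ContinuousAt (fun w => ((m:ℂ)+1) * v w + (w - z₀) * deriv v w) z₀ := by
      have c1 : ContinuousAt v z₀ := hv.continuousAt
      have c2 : ContinuousAt (deriv v) z₀ := (analyticAt_deriv hv).continuousAt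
      fun_prop
    simpa using this.continuousWithinAt.tendsto
  have hR : Tendsto (fun w => A w * ((w - z₀) * v w)) (𝓝[≠] z₀) (𝓝 0) := by
    have : ContinuousAt (fun w => A w * ((w - z₀) * v w)) z₀ := by
      have c1 : ContinuousAt v z₀ := hv.continuousAt
      have c2 : ContinuousAt A z₀ := hA.continuousAt
      fun_prop
    have h2 := (this.continuousWithinAt (s := {z₀}ᶜ)).tendsto
    simpa using h2
  have := tendsto_nhds_unique (hL.congr' key) hR
  rcases mul_eq_zero.mp this with h | h
  · exact Nat.cast_add_one_ne_zero m h
  · exact hv0 h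

lemma mobius_analyticAt (a b c d z : ℂ) (h : c*z+d ≠ 0) :
    AnalyticAt ℂ (fun w => (a*w+b)/(c*w+d)) z :=
  AnalyticAt.div ((analyticAt_const.mul analyticAt_id).add analyticAt_const)
    ((analyticAt_const.mul analyticAt_id).add analyticAt_const) h

lemma schwarzian_eq_implies_mobius {f F : ℂ → ℂ}
    (hfA : AnalyticOnNhd ℂ f (ball 0 1)) (hFA : AnalyticOnNhd ℂ F (ball 0 1))
    (hf' : ∀ z ∈ ball (0:ℂ) 1, deriv f z ≠ 0) (hF' : ∀ z ∈ ball (0:ℂ) 1, deriv F z ≠ 0)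
    (hS : ∀ z ∈ ball (0:ℂ) 1, schwarzian F z = schwarzian f z) :
    ∃ a b c d : ℂ, a * d - b * c = 1 ∧
      ∀ z ∈ ball (0:ℂ) 1, c * f z + d ≠ 0 ∧ F z = (a * f z + b) / (c * f z + d) := by
  have h0 : (0:ℂ) ∈ ball (0:ℂ) 1 := by simp
  have hball : ball (0:ℂ) 1 ∈ 𝓝 (0:ℂ) := isOpen_ball.mem_nhds h0
  set F1 := deriv F 0 with hF1def
  set f1 := deriv f 0 with hf1def
  set F2 := deriv (deriv F) 0 with hF2def
  set f2 := deriv (deriv f) 0 with hf2def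
  have hF1 : F1 ≠ 0 := hF' 0 h0
  have hf1 : f1 ≠ 0 := hf' 0 h0
  set α := f1 / F1 with hα
  have hα0 : α ≠ 0 := div_ne_zero hf1 hF1
  have hαF1 : α * F1 = f1 := by rw [hα]; field_simp
  set β := (α * F2 - f2) / (2 * α * F1^2) with hβ
  have hβ2 : 2 * α * F1^2 * β = α * F2 - f2 := by
    rw [hβ]; field_simp
  set A := f 0 * β + α with hA'
  set B := f 0 * (1 - β * F 0) - α * F 0 with hB'
  set C := β with hC'
  set D := 1 - β * F 0 with hD'
  have hdetM : A * D - B * C = α := by rw [hA', hB', hC', hD']; ring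
  have hCD0 : C * F 0 + D = 1 := by rw [hC', hD']; ring
  have hAFB : A * F 0 + B = f 0 := by rw [hA', hB']; ring
  clear_value F1 f1 F2 f2 α β A B C D
  set M : ℂ → ℂ := fun w => (A * w + B) / (C * w + D) with hM
  set h : ℂ → ℂ := M ∘ F with hh
  -- eventual facts near 0
  have hFanal : ∀ᶠ w in 𝓝 (0:ℂ), AnalyticAt ℂ F w := (hFA 0 h0).eventually_analyticAt
  have hfanal : ∀ᶠ w in 𝓝 (0:ℂ), AnalyticAt ℂ f w := (hfA 0 h0).eventually_analyticAt
  have hCD : ∀ᶠ w in 𝓝 (0:ℂ), C * F w + D ≠ 0 := by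
    have hc : ContinuousAt (fun w => C * F w + D) 0 := by
      have := (hFA 0 h0).continuousAt; fun_prop
    exact hc.eventually_ne (by rw [hCD0]; exact one_ne_zero)
  have hf'ne : ∀ᶠ w in 𝓝 (0:ℂ), deriv f w ≠ 0 := by
    filter_upwards [hball] with w hw; exact hf' w hw
  -- h analytic & derivative formula near 0
  have hhanal : ∀ᶠ w in 𝓝 (0:ℂ), AnalyticAt ℂ h w := by
    filter_upwards [hCD, hFanal] with w hcd hFw
    exact (mobius_analyticAt A B C D (F w) hcd).comp hFw
  have hdh : deriv h =ᶠ[𝓝 (0:ℂ)] fun w => (A*D-B*C)/(C*F w+D)^2 * deriv F w := by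
    filter_upwards [hCD, hFanal] with w hcd hFw
    exact (HasDerivAt.comp w (mobius_hasDerivAt A B C D (F w) hcd)
      hFw.differentiableAt.hasDerivAt).deriv
  have hdh0 : deriv h 0 = f1 := by
    rw [hdh.self_of_nhds]
    show (A*D-B*C)/(C*F 0+D)^2 * deriv F 0 = f1
    rw [hCD0, hdetM]
    rw [← hF1def]
    simp [hαF1]
  have hdh'ne : ∀ᶠ w in 𝓝 (0:ℂ), deriv h w ≠ 0 := by
    have hc : ContinuousAt (deriv h) 0 := (analyticAt_deriv (hhanal.self_of_nhds)).continuousAt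
    exact hc.eventually_ne (by rw [hdh0]; exact hf1)
  -- second derivative of h at 0
  have hG1 : HasDerivAt (fun w => C * F w + D) (C * F1) 0 := by
    simpa [← hF1def] using ((hFA 0 h0).differentiableAt.hasDerivAt.const_mul C).add_const D
  have hpow2 : HasDerivAt (fun w => (C * F w + D)^2) (2*(C * F 0 + D)^1*(C * F1)) 0 := by
    simpa using hG1.fun_pow 2
  have hq1 : HasDerivAt (fun w => (A*D-B*C)/(C*F w+D)^2)
      ((0 * (C*F 0+D)^2 - (A*D-B*C) * (2*(C * F 0 + D)^1*(C * F1)))/((C*F 0+D)^2)^2) 0 :=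
    (hasDerivAt_const 0 (A*D-B*C)).fun_div hpow2 (pow_ne_zero 2 (by rw [hCD0]; exact one_ne_zero))
  have hu2 : HasDerivAt (deriv F) F2 0 := by
    simpa [← hF2def] using (analyticAt_deriv (hFA 0 h0)).differentiableAt.hasDerivAt
  have hddh0 : deriv (deriv h) 0 = f2 := by
    rw [Filter.EventuallyEq.deriv_eq hdh, (hq1.fun_mul hu2).deriv]
    rw [hCD0, hdetM]
    simp only [one_pow, pow_one, mul_one, one_mul, zero_mul, zero_sub, div_one]
    rw [← hF1def]
    linear_combination (-(1:ℂ)) * hβ2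
  -- the functions P_h, P_f and q
  set Ph : ℂ → ℂ := fun w => deriv (deriv h) w / deriv h w with hPh
  set Pf : ℂ → ℂ := fun w => deriv (deriv f) w / deriv f w with hPf
  set q : ℂ → ℂ := fun w => Ph w - Pf w with hq
  have hPhanal : ∀ᶠ w in 𝓝 (0:ℂ), AnalyticAt ℂ Ph w := by
    filter_upwards [hhanal, hdh'ne] with w h1 h2
    exact (analyticAt_deriv (analyticAt_deriv h1)).div (analyticAt_deriv h1) h2
  have hPfanal : ∀ᶠ w in 𝓝 (0:ℂ), AnalyticAt ℂ Pf w := by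
    filter_upwards [hfanal, hf'ne] with w h1 h2
    exact (analyticAt_deriv (analyticAt_deriv h1)).div (analyticAt_deriv h1) h2
  have hq0 : q 0 = 0 := by
    rw [hq]
    simp only [hPh, hPf, hdh0, hddh0, ← hf1def, ← hf2def, sub_self]
  -- Schwarzian of h equals Schwarzian of f near 0
  have hSh : ∀ᶠ w in 𝓝 (0:ℂ), schwarzian h w = schwarzian f w := by
    filter_upwards [hCD, hFanal, hball] with w hcd hFw hwball
    have hMF' : deriv M (F w) = (A*D-B*C)/(C*F w+D)^2 :=
      (mobius_hasDerivAt A B C D (F w) hcd).deriv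
    have hMF'ne : deriv M (F w) ≠ 0 := by
      rw [hMF', hdetM]
      exact div_ne_zero hα0 (pow_ne_zero 2 hcd)
    have := schwarzian_comp (f := M) (g := F) (mobius_analyticAt A B C D (F w) hcd)
      hFw hMF'ne (hF' w hwball)
    rw [hh, this, schwarzian_mobius A B C D (F w) (by rw [hdetM]; exact hα0) hcd,
      zero_mul, zero_add]
    exact hS w hwball
  -- q satisfies a linear ODE near 0
  have hqder : ∀ᶠ w in 𝓝 (0:ℂ), deriv q w = (1/2 * (Ph w + Pf w)) * q w := by
    filter_upwards [hPhanal.eventually_nhds, hPfanal.eventually_nhds, hSh] with w h1 h2 hsw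
    have d1 : deriv q w = deriv Ph w - deriv Pf w :=
      deriv_sub h1.self_of_nhds.differentiableAt h2.self_of_nhds.differentiableAt
    have e1 : deriv Ph w = schwarzian h w + 1/2 * (Ph w)^2 := by
      unfold schwarzian; rw [hPh]; ring
    have e2 : deriv Pf w = schwarzian f w + 1/2 * (Pf w)^2 := by
      unfold schwarzian; rw [hPf]; ring
    rw [d1, e1, e2, hsw, hq]
    ring
  have hqzero : ∀ᶠ w in 𝓝 (0:ℂ), q w = 0 := by
    refine eventually_zero_of_deriv_eq ?_ ?_ hq0 hqder
    · exact (hPhanal.self_of_nhds).sub (hPfanal.self_of_nhds)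
    · exact (analyticAt_const.mul ((hPhanal.self_of_nhds).add (hPfanal.self_of_nhds)))
  -- r := h' - f' vanishes near 0
  set r : ℂ → ℂ := fun w => deriv h w - deriv f w with hr
  have hr0 : r 0 = 0 := by rw [hr]; simp only [hdh0, ← hf1def, sub_self]
  have hrder : ∀ᶠ w in 𝓝 (0:ℂ), deriv r w = Pf w * r w := by
    filter_upwards [hhanal.eventually_nhds, hfanal.eventually_nhds, hqzero,
      hdh'ne, hf'ne] with w h1 h2 hqw hne1 hne2
    have d1 : deriv r w = deriv (deriv h) w - deriv (deriv f) w := by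
      rw [hr]
      exact deriv_sub (analyticAt_deriv h1.self_of_nhds).differentiableAt
        (analyticAt_deriv h2.self_of_nhds).differentiableAt
    have hPhPf : Ph w = Pf w := sub_eq_zero.mp hqw
    have e1 : deriv (deriv h) w = Ph w * deriv h w := by
      simp only [hPh]; field_simp
    have e2 : deriv (deriv f) w = Pf w * deriv f w := by
      simp only [hPf]; field_simp
    rw [d1, e1, e2, hPhPf, hr]
    ring
  have hrzero : ∀ᶠ w in 𝓝 (0:ℂ), r w = 0 := by
    refine eventually_zero_of_deriv_eq ?_ hPfanal.self_of_nhds hr0 hrder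
    exact (analyticAt_deriv hhanal.self_of_nhds).sub (analyticAt_deriv hfanal.self_of_nhds)
  -- s := h - f vanishes near 0
  set s : ℂ → ℂ := fun w => h w - f w with hs
  have hs0 : s 0 = 0 := by
    simp only [hs, hh, Function.comp_apply, hM, hAFB, hCD0]
    simp
  have hsder : ∀ᶠ w in 𝓝 (0:ℂ), deriv s w = 0 * s w := by
    filter_upwards [hhanal, hfanal, hrzero] with w h1 h2 hrw
    have d1 : deriv s w = deriv h w - deriv f w := by
      simp only [hs]
      exact deriv_sub h1.differentiableAt h2.differentiableAt
    rw [d1, zero_mul]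
    rw [hr] at hrw
    exact hrw
  have hszero : ∀ᶠ w in 𝓝 (0:ℂ), s w = 0 := by
    refine eventually_zero_of_deriv_eq ?_ analyticAt_const hs0 hsder
    exact (hhanal.self_of_nhds).sub (hfanal.self_of_nhds)
  have hhf : ∀ᶠ w in 𝓝 (0:ℂ), h w = f w := by
    filter_upwards [hszero] with w hw
    rw [hs] at hw
    exact sub_eq_zero.mp hw
  -- square root of α and the final coefficients
  obtain ⟨ρ, hρ⟩ := IsAlgClosed.exists_pow_nat_eq (k := ℂ) α (n := 2) two_pos
  have hρ0 : ρ ≠ 0 := by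
    intro h'
    apply hα0
    rw [← hρ, h']
    norm_num
  have hdet1 : (D/ρ) * (A/ρ) - (-B/ρ) * (-C/ρ) = 1 := by
    field_simp
    linear_combination hdetM - hρ
  refine ⟨D/ρ, -B/ρ, -C/ρ, A/ρ, hdet1, ?_⟩
  set φ : ℂ → ℂ := fun z => (-C/ρ * f z + A/ρ) * F z - (D/ρ * f z + -B/ρ) with hφ
  have hφ0 : φ =ᶠ[𝓝 (0:ℂ)] 0 := by
    filter_upwards [hhf, hCD] with w hw hcd
    have e0 : (A * F w + B)/(C * F w + D) = f w := hw
    rw [div_eq_iff hcd] at e0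
    show (-C/ρ * f w + A/ρ) * F w - (D/ρ * f w + -B/ρ) = 0
    field_simp
    linear_combination e0
  have hφA : AnalyticOnNhd ℂ φ (ball 0 1) := by
    intro z hz
    simp only [hφ]
    exact (((analyticAt_const.mul (hfA z hz)).add analyticAt_const).mul (hFA z hz)).sub
      ((analyticAt_const.mul (hfA z hz)).add analyticAt_const)
  have hzero : EqOn φ 0 (ball (0:ℂ) 1) :=
    hφA.eqOn_zero_of_preconnected_of_eventuallyEq_zero
      (convex_ball (0:ℂ) 1).isPreconnected h0 hφ0
  intro z hz
  have hφz : (-C/ρ * f z + A/ρ) * F z - (D/ρ * f z + -B/ρ) = 0 := hzero hz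
  have hdenne : -C/ρ * f z + A/ρ ≠ 0 := by
    intro hden
    have hnum : D/ρ * f z + -B/ρ = 0 := by
      linear_combination (-1 : ℂ) * hφz + F z * hden
    have h10 : D/ρ * (A/ρ) - -B/ρ * (-C/ρ) = 0 := by
      linear_combination (D/ρ) * hden - (-C/ρ) * hnum
    rw [hdet1] at h10
    exact one_ne_zero h10
  refine ⟨hdenne, ?_⟩
  rw [eq_div_iff hdenne]
  linear_combination hφz

lemma quad_zero {A B C u v w : ℂ} (huv : v ≠ u) (huw : w ≠ u) (hvw : w ≠ v)
    (h1 : A*u^2 + B*u + C = 0) (h2 : A*v^2 + B*v + C = 0) (h3 : A*w^2 + B*w + C = 0) :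
    A = 0 ∧ B = 0 ∧ C = 0 := by
  have k1 : (u - v) * (A*(u+v) + B) = 0 := by linear_combination h1 - h2
  have k2 : (v - w) * (A*(v+w) + B) = 0 := by linear_combination h2 - h3
  have l1 := (mul_eq_zero.mp k1).resolve_left (sub_ne_zero.mpr huv.symm)
  have l2 := (mul_eq_zero.mp k2).resolve_left (sub_ne_zero.mpr hvw.symm)
  have hA : A = 0 := by
    have k3 : (u - w) * A = 0 := by linear_combination l1 - l2
    exact (mul_eq_zero.mp k3).resolve_left (sub_ne_zero.mpr huw.symm)
  have hB : B = 0 := by linear_combination l1 - (u + v) * hA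
  exact ⟨hA, hB, by linear_combination h1 - u^2 * hA - u * hB⟩

/-- for a group `G` of Möbius transformations mapping the unit disc
onto itself (acting via `ι`) and a locally injective holomorphic `f` on `𝔻`, the
Schwarzian `S_f` is a quadratic differential for `G` iff for each `g ∈ G` there is a
(determinant-one) Möbius transformation `M_g` with `f ∘ g = M_g ∘ f` on `𝔻`;
moreover `M_g` is unique (up to the sign of the normalized matrix) and
`g ↦ M_g` is a group homomorphism, i.e. `f ∘ ι(g·h) = M_g ∘ M_h ∘ f` on `𝔻`. -/
theorem deformation_quadratic_differential_correspondence
    (G : Type*) [Group G]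
    (ι : G → ℂ → ℂ)
    (hmob : ∀ g : G, ∃ a b c d : ℂ, a * d - b * c ≠ 0 ∧
      ∀ z ∈ Metric.ball (0 : ℂ) 1, c * z + d ≠ 0 ∧ ι g z = (a * z + b) / (c * z + d))
    (hbij : ∀ g : G, Set.BijOn (ι g) (Metric.ball (0 : ℂ) 1) (Metric.ball (0 : ℂ) 1))
    (hone : ∀ z ∈ Metric.ball (0 : ℂ) 1, ι 1 z = z)
    (hmul : ∀ g h : G, ∀ z ∈ Metric.ball (0 : ℂ) 1, ι (g * h) z = ι g (ι h z))
    (f : ℂ → ℂ) (hf : DifferentiableOn ℂ f (Metric.ball 0 1))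
    (hf' : ∀ z ∈ Metric.ball (0 : ℂ) 1, deriv f z ≠ 0) :
    ((∀ g : G, ∀ z ∈ Metric.ball (0 : ℂ) 1,
        schwarzian f z = schwarzian f (ι g z) * (deriv (ι g) z) ^ 2) ↔
      (∀ g : G, ∃ a b c d : ℂ, a * d - b * c = 1 ∧
        ∀ z ∈ Metric.ball (0 : ℂ) 1, c * f z + d ≠ 0 ∧
          f (ι g z) = (a * f z + b) / (c * f z + d))) ∧
    (∀ g : G, ∀ a b c d a' b' c' d' : ℂ,
      a * d - b * c = 1 → a' * d' - b' * c' = 1 →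
      (∀ z ∈ Metric.ball (0 : ℂ) 1, c * f z + d ≠ 0 ∧
        f (ι g z) = (a * f z + b) / (c * f z + d)) →
      (∀ z ∈ Metric.ball (0 : ℂ) 1, c' * f z + d' ≠ 0 ∧
        f (ι g z) = (a' * f z + b') / (c' * f z + d')) →
      ((a, b, c, d) = (a', b', c', d') ∨ (a, b, c, d) = (-a', -b', -c', -d'))) ∧
    (∀ g h : G, ∀ a₁ b₁ c₁ d₁ a₂ b₂ c₂ d₂ : ℂ,
      a₁ * d₁ - b₁ * c₁ = 1 → a₂ * d₂ - b₂ * c₂ = 1 →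
      (∀ z ∈ Metric.ball (0 : ℂ) 1, c₁ * f z + d₁ ≠ 0 ∧
        f (ι g z) = (a₁ * f z + b₁) / (c₁ * f z + d₁)) →
      (∀ z ∈ Metric.ball (0 : ℂ) 1, c₂ * f z + d₂ ≠ 0 ∧
        f (ι h z) = (a₂ * f z + b₂) / (c₂ * f z + d₂)) →
      ∀ z ∈ Metric.ball (0 : ℂ) 1,
        f (ι (g * h) z) =
          (a₁ * ((a₂ * f z + b₂) / (c₂ * f z + d₂)) + b₁) /
            (c₁ * ((a₂ * f z + b₂) / (c₂ * f z + d₂)) + d₁)) := by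
  have h0 : (0:ℂ) ∈ ball (0:ℂ) 1 := by simp
  have hball : ball (0:ℂ) 1 ∈ 𝓝 (0:ℂ) := isOpen_ball.mem_nhds h0
  have hfA : AnalyticOnNhd ℂ f (ball 0 1) := hf.analyticOnNhd isOpen_ball
  have hι : ∀ g : G, ∀ z ∈ ball (0:ℂ) 1, AnalyticAt ℂ (ι g) z ∧ deriv (ι g) z ≠ 0 ∧
      schwarzian (ι g) z = 0 := by
    intro g z hz
    obtain ⟨a, b, c, d, hdet, hloc⟩ := hmob g
    have hev : ι g =ᶠ[𝓝 z] fun w => (a*w+b)/(c*w+d) := by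
      filter_upwards [isOpen_ball.mem_nhds hz] with w hw
      exact (hloc w hw).2
    have hcd := (hloc z hz).1
    refine ⟨(mobius_analyticAt a b c d z hcd).congr hev.symm, ?_, ?_⟩
    · rw [hev.deriv_eq, (mobius_hasDerivAt a b c d z hcd).deriv]
      exact div_ne_zero hdet (pow_ne_zero 2 hcd)
    · rw [schwarzian_congr hev]
      exact schwarzian_mobius a b c d z hdet hcd
  refine ⟨⟨?_, ?_⟩, ?_, ?_⟩
  · -- (i) → (ii)
    intro hQD g
    set F : ℂ → ℂ := f ∘ ι g with hF
    have hmem : ∀ z ∈ ball (0:ℂ) 1, ι g z ∈ ball (0:ℂ) 1 := fun z hz => (hbij g).mapsTo hz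
    have hFA : AnalyticOnNhd ℂ F (ball 0 1) := fun z hz =>
      (hfA _ (hmem z hz)).comp (hι g z hz).1
    have hFder : ∀ z ∈ ball (0:ℂ) 1, deriv F z = deriv f (ι g z) * deriv (ι g) z := by
      intro z hz
      exact (HasDerivAt.comp z (hfA _ (hmem z hz)).differentiableAt.hasDerivAt
        (hι g z hz).1.differentiableAt.hasDerivAt).deriv
    have hF' : ∀ z ∈ ball (0:ℂ) 1, deriv F z ≠ 0 := by
      intro z hz
      rw [hFder z hz]
      exact mul_ne_zero (hf' _ (hmem z hz)) (hι g z hz).2.1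
    have hS : ∀ z ∈ ball (0:ℂ) 1, schwarzian F z = schwarzian f z := by
      intro z hz
      rw [hF, schwarzian_comp (hfA _ (hmem z hz)) (hι g z hz).1
        (hf' _ (hmem z hz)) (hι g z hz).2.1, (hι g z hz).2.2, add_zero]
      exact (hQD g z hz).symm
    obtain ⟨a, b, c, d, hdet, hrep⟩ :=
      schwarzian_eq_implies_mobius hfA hFA hf' hF' hS
    exact ⟨a, b, c, d, hdet, hrep⟩
  · -- (ii) → (i)
    intro hrep g z hz
    obtain ⟨a, b, c, d, hdet, hloc⟩ := hrep g
    have hcd := (hloc z hz).1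
    have hdet0 : a * d - b * c ≠ 0 := by rw [hdet]; exact one_ne_zero
    have hMan := mobius_analyticAt a b c d (f z) hcd
    have hM'ne : deriv (fun w => (a*w+b)/(c*w+d)) (f z) ≠ 0 := by
      rw [(mobius_hasDerivAt a b c d (f z) hcd).deriv]
      exact div_ne_zero hdet0 (pow_ne_zero 2 hcd)
    have hmem : ι g z ∈ ball (0:ℂ) 1 := (hbij g).mapsTo hz
    have hcomp1 : schwarzian ((fun w => (a*w+b)/(c*w+d)) ∘ f) z = schwarzian f z := by
      rw [schwarzian_comp hMan (hfA z hz) hM'ne (hf' z hz),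
        schwarzian_mobius a b c d (f z) hdet0 hcd]
      ring
    have hcomp2 : schwarzian (f ∘ ι g) z = schwarzian f (ι g z) * deriv (ι g) z ^ 2 := by
      rw [schwarzian_comp (hfA _ hmem) (hι g z hz).1 (hf' _ hmem) (hι g z hz).2.1,
        (hι g z hz).2.2, add_zero]
    have heq : ((fun w => (a*w+b)/(c*w+d)) ∘ f) =ᶠ[𝓝 z] (f ∘ ι g) := by
      filter_upwards [isOpen_ball.mem_nhds hz] with w hw
      exact ((hloc w hw).2).symm
    rw [← hcomp1, schwarzian_congr heq, hcomp2]
  · -- uniqueness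
    intro g a b c d a' b' c' d' hdet hdet' hrep hrep'
    have hnc : ∀ w : ℂ, ∀ᶠ z in 𝓝[≠] (0:ℂ), f z ≠ w := by
      intro w
      rcases (hfA 0 h0).eventually_eq_or_eventually_ne (analyticAt_const (v := w)) with hc | hn
      · exfalso
        apply hf' 0 h0
        have : deriv f 0 = deriv (fun _ : ℂ => w) 0 := Filter.EventuallyEq.deriv_eq hc
        simpa using this
      · exact hn
    have hballp : ∀ᶠ z in 𝓝[≠] (0:ℂ), z ∈ ball (0:ℂ) 1 := nhdsWithin_le_nhds hball
    obtain ⟨z1, hz1a, hz1b⟩ := ((hnc (f 0)).and hballp).exists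
    obtain ⟨z2, ⟨hz2a, hz2c⟩, hz2b⟩ := (((hnc (f 0)).and (hnc (f z1))).and hballp).exists
    have key : ∀ z ∈ ball (0:ℂ) 1,
        (a * f z + b) * (c' * f z + d') = (a' * f z + b') * (c * f z + d) := by
      intro z hz
      have e := ((hrep z hz).2).symm.trans ((hrep' z hz).2)
      exact (div_eq_div_iff (hrep z hz).1 (hrep' z hz).1).mp e
    have Q : ∀ z ∈ ball (0:ℂ) 1, (a*c' - a'*c) * (f z)^2
        + (a*d' + b*c' - a'*d - b'*c) * (f z) + (b*d' - b'*d) = 0 := by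
      intro z hz
      linear_combination key z hz
    obtain ⟨hA, hB, hC⟩ := quad_zero hz1a hz2a hz2c (Q 0 h0) (Q z1 hz1b) (Q z2 hz2b)
    set p := a*d' - c*b' with hp
    have hp2 : p^2 = 1 := by
      linear_combination p * hB - (b*d' - b'*d) * hA + (a*d - b*c) * hdet' + hdet
    have ha : a = a' * p := by linear_combination (-b') * hA - a * hdet'
    have hb : b = b' * p := by linear_combination a' * hC + (-b') * hB - b * hdet'
    have hc : c = c' * p := by linear_combination (-d') * hA - c * hdet'
    have hd : d = d' * p := by linear_combination c' * hC + (-d') * hB - d * hdet'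
    have hp1 : p = 1 ∨ p = -1 := by
      have h' : (p - 1) * (p + 1) = 0 := by linear_combination hp2
      rcases mul_eq_zero.mp h' with h'' | h''
      · left; linear_combination h''
      · right; linear_combination h''
    rcases hp1 with h1 | h1
    · left
      simp only [Prod.mk.injEq]
      refine ⟨by rw [ha, h1, mul_one], by rw [hb, h1, mul_one],
        by rw [hc, h1, mul_one], by rw [hd, h1, mul_one]⟩
    · right
      simp only [Prod.mk.injEq]
      refine ⟨by rw [ha, h1]; ring, by rw [hb, h1]; ring,
        by rw [hc, h1]; ring, by rw [hd, h1]; ring⟩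
  · -- homomorphism
    intro g h a₁ b₁ c₁ d₁ a₂ b₂ c₂ d₂ hdet1 hdet2 hrep1 hrep2 z hz
    have hmem : ι h z ∈ ball (0:ℂ) 1 := (hbij h).mapsTo hz
    rw [hmul g h z hz, (hrep1 (ι h z) hmem).2, (hrep2 z hz).2]
end

section
/- Let X be a locally compact topological space, let U ⊆ X be an open set whose complement has empty interior, and let (U_j) be a sequence of open subsets of X converging to U in the sense of Carathéodory. Then the sequence of open sets int(X ∖ U_j) converges to the empty set in the sense of Carathéodory; equivalently, for every nonempty open V ⊆ X there are only finitely many indices j with V ⊆ int(X ∖ U_j). -/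
/-- A sequence of open sets `U j` converges to an open set `L` in the sense of
Carathéodory iff (1) every compact `K ⊆ L` is eventually contained in the `U j`,
and (2) every open set contained in `U j` for infinitely many `j` is contained
in `L`. -/
def CaratheodoryConv {X : Type*} [TopologicalSpace X] (U : ℕ → Set X) (L : Set X) :
    Prop :=
  (∀ K : Set X, IsCompact K → K ⊆ L → ∃ N : ℕ, ∀ n ≥ N, K ⊆ U n) ∧
  (∀ V : Set X, IsOpen V → {j : ℕ | V ⊆ U j}.Infinite → V ⊆ L)

/-- if `X` is locally compact, `U ⊆ X` is open with `int(Uᶜ) = ∅`, and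
the open sets `U j` converge to `U` in the sense of Carathéodory, then the open sets
`int(X ∖ U j)` converge to `∅` in the sense of Carathéodory; equivalently, every
nonempty open `V` satisfies `V ⊆ int(X ∖ U j)` for only finitely many `j`. -/
theorem caratheodory_complements_to_empty
    {X : Type*} [TopologicalSpace X] [LocallyCompactSpace X]
    (U : Set X) (hU : IsOpen U) (hUc : interior (Uᶜ) = ∅)
    (Useq : ℕ → Set X) (hopen : ∀ j, IsOpen (Useq j))
    (hconv : CaratheodoryConv Useq U) :
    CaratheodoryConv (fun j => interior ((Useq j)ᶜ)) ∅ ∧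
    ∀ V : Set X, IsOpen V → V.Nonempty →
      {j : ℕ | V ⊆ interior ((Useq j)ᶜ)}.Finite := by
  have key : ∀ V : Set X, IsOpen V → V.Nonempty →
      {j : ℕ | V ⊆ interior ((Useq j)ᶜ)}.Finite := by
    intro V hV hVne
    by_contra hinf
    rw [← Set.not_infinite, not_not] at hinf
    have hVU : (V ∩ U).Nonempty := by
      by_contra h
      rw [Set.not_nonempty_iff_eq_empty] at h
      have hsub : V ⊆ Uᶜ := fun x hx => fun hxU =>
        Set.eq_empty_iff_forall_notMem.mp h x ⟨hx, hxU⟩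
      have : V ⊆ interior (Uᶜ) := interior_maximal hsub hV
      rw [hUc] at this
      exact hVne.ne_empty (Set.subset_empty_iff.mp this)
    obtain ⟨x, hxV, hxU⟩ := hVU
    obtain ⟨K, hKc, hxK, hKsub⟩ := exists_compact_subset (hV.inter hU) ⟨hxV, hxU⟩
    obtain ⟨N, hN⟩ := hconv.1 K hKc (hKsub.trans Set.inter_subset_right)
    obtain ⟨j, hjmem, hjN⟩ := hinf.exists_gt N
    have hx1 : x ∈ Useq j := hN j hjN.le (interior_subset hxK)
    have hx2 : x ∈ (Useq j)ᶜ :=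
      interior_subset (hjmem (hKsub (interior_subset hxK)).1)
    exact hx2 hx1
  refine ⟨⟨fun K hK hKe => ⟨0, fun n _ => hKe.trans (Set.empty_subset _)⟩,
      fun V hV hinf => ?_⟩, key⟩
  rcases Set.eq_empty_or_nonempty V with h | h
  · exact h ▸ Set.Subset.rfl
  · exact absurd hinf (key V hV h).not_infinite
end
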